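/- arXiv:1010.3559 — 4 statements merged into one kernel-verified Lean document; each statement's English description precedes it below -/
import Mathlib

section
/- Let g: S¹ → S¹ be a homeomorphism of the circle without fixed points. Then there exist an integer n ≥ 3 and closed arcs I₁, …, Iₙ of S¹ whose union is S¹, such that any two distinct arcs Iⱼ and Iₖ intersect in at most a common endpoint, and g(Iⱼ) ∩ Iⱼ = ∅ for every j ∈ {1, …, n}. -/
noncomputable section

open Set Topology

/-- a fixed point free homeomorphism `g` of the circle admits a finite
decomposition of the circle into `n ≥ 3` closed arcs, any two distinct ones meeting in
at most a common endpoint, each arc being disjoint from its `g`-image. -/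
theorem stmt8 (g : AddCircle (1 : ℝ) ≃ₜ AddCircle (1 : ℝ)) (hg : ∀ x, g x ≠ x) :
    ∃ n : ℕ, 3 ≤ n ∧ ∃ e : Fin n → C(unitInterval, AddCircle (1 : ℝ)),
      (∀ j, Topology.IsEmbedding (e j)) ∧
      (⋃ j, Set.range (e j)) = Set.univ ∧
      (∀ j k, j ≠ k →
        Set.range (e j) ∩ Set.range (e k) ⊆ ({e j 0, e j 1} ∩ {e k 0, e k 1}) ∧
        (Set.range (e j) ∩ Set.range (e k)).Subsingleton) ∧
      (∀ j, (⇑g '' Set.range (e j)) ∩ Set.range (e j) = ∅) := by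
  classical
  have hcoe : ∀ a b : ℝ, (↑a : AddCircle (1:ℝ)) = ↑b ↔ ∃ m : ℤ, a - b = m := by
    intro a b
    rw [show ((a:AddCircle (1:ℝ)) = b) ↔ ((↑(a-b) : AddCircle (1:ℝ)) = 0) by
      rw [AddCircle.coe_sub, sub_eq_zero], AddCircle.coe_eq_zero_iff]
    simp [eq_comm]
  have hnorm : ∀ r : ℝ, ‖(↑r : AddCircle (1:ℝ))‖ ≤ |r| := fun r => by
    simpa using QuotientAddGroup.norm_mk_le_norm (S := AddSubgroup.zmultiples (1:ℝ)) (m := r)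
  have hcont : Continuous fun x : AddCircle (1:ℝ) => ‖g x - x‖ :=
    (g.continuous.sub continuous_id).norm
  obtain ⟨x₀, -, hx₀⟩ := isCompact_univ.exists_isMinOn univ_nonempty hcont.continuousOn
  set ε := ‖g x₀ - x₀‖ with hεdef
  have hεpos : 0 < ε := norm_pos_iff.2 (sub_ne_zero.2 (hg x₀))
  have hmin : ∀ x, ε ≤ ‖g x - x‖ := fun x => hx₀ (mem_univ x)
  obtain ⟨n, hn3, hngt⟩ : ∃ n : ℕ, 3 ≤ n ∧ 1/ε < (n:ℝ) := by
    refine ⟨max 3 (⌊1/ε⌋₊ + 1), le_max_left _ _, ?_⟩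
    have h1 : 1/ε < (⌊1/ε⌋₊ : ℝ) + 1 := Nat.lt_floor_add_one _
    have h2 : ((⌊1/ε⌋₊ + 1 : ℕ) : ℝ) ≤ ((max 3 (⌊1/ε⌋₊ + 1) : ℕ) : ℝ) := by
      exact_mod_cast le_max_right 3 (⌊1/ε⌋₊ + 1)
    push_cast at h2 ⊢
    linarith
  have hnR : (0:ℝ) < n := by
    have h : 0 < n := by omega
    exact_mod_cast h
  have hn3R : (3:ℝ) ≤ n := by exact_mod_cast hn3
  have h1n : (1:ℝ)/n < ε := by
    rw [div_lt_iff₀ hnR]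
    rw [div_lt_iff₀ hεpos] at hngt
    nlinarith
  set e : Fin n → C(unitInterval, AddCircle (1:ℝ)) :=
    fun j => ⟨fun t => (↑((((j:ℕ):ℝ) + (t:ℝ)) / n) : AddCircle (1:ℝ)),
      (AddCircle.continuous_mk' 1).comp
        ((continuous_const.add continuous_subtype_val).div_const _)⟩ with hedef
  have he : ∀ (j : Fin n) (t : unitInterval),
      e j t = (↑((((j:ℕ):ℝ) + (t:ℝ)) / n) : AddCircle (1:ℝ)) := fun _ _ => rfl
  have he0 : ∀ j : Fin n, e j 0 = (↑(((j:ℕ):ℝ)/n) : AddCircle (1:ℝ)) := by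
    intro j; rw [he]; norm_num
  have he1 : ∀ j : Fin n, e j 1 = (↑((((j:ℕ):ℝ)+1)/n) : AddCircle (1:ℝ)) := by
    intro j; rw [he]; norm_num
  have hle1 : ∀ m : ℤ, |(m:ℝ) * n| ≤ n → m = -1 ∨ m = 0 ∨ m = 1 := by
    intro m hm
    rw [abs_mul, abs_of_pos hnR] at hm
    have h1 : |(m:ℝ)| ≤ 1 := le_of_mul_le_mul_right (by linarith [hm]) hnR
    rw [abs_le] at h1
    have h2 : (-1:ℤ) ≤ m := by exact_mod_cast h1.1
    have h3 : m ≤ 1 := by exact_mod_cast h1.2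
    omega
  have hinj : ∀ j, Function.Injective (e j) := by
    intro j s t h
    rw [he, he, hcoe] at h
    obtain ⟨m, hm⟩ := h
    rw [div_sub_div_same] at hm
    have hm' : ((j:ℕ):ℝ) + s - (((j:ℕ):ℝ) + t) = m * n := (div_eq_iff hnR.ne').1 hm
    have hm0 : m = 0 := by
      rcases hle1 m (by rw [abs_le]; constructor <;>
        linarith [s.2.1, s.2.2, t.2.1, t.2.2]) with h | h | h
      · exfalso; rw [h] at hm'; push_cast at hm'
        linarith [s.2.1, s.2.2, t.2.1, t.2.2]
      · exact h
      · exfalso; rw [h] at hm'; push_cast at hm'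
        linarith [s.2.1, s.2.2, t.2.1, t.2.2]
    rw [hm0] at hm'
    push_cast at hm'
    exact Subtype.ext (by linarith)
  have hemb : ∀ j, Topology.IsEmbedding (e j) :=
    fun j => ((e j).continuous.isClosedEmbedding (hinj j)).toIsEmbedding
  -- bounds on Fin values
  have hjb : ∀ j : Fin n, ((j:ℕ):ℝ) ≤ (n:ℝ) - 1 := by
    intro j
    have : ((j:ℕ) : ℝ) + 1 ≤ n := by exact_mod_cast j.isLt
    linarith
  have hjb0 : ∀ j : Fin n, (0:ℝ) ≤ ((j:ℕ):ℝ) := fun j => by positivity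
  -- the key intersection lemma
  have hkey : ∀ j k : Fin n, j ≠ k → ∀ z, z ∈ Set.range (e j) ∩ Set.range (e k) →
      z ∈ (({e j 0, e j 1} : Set (AddCircle (1:ℝ))) ∩ {e k 0, e k 1}) ∧
      z = (if (k:ℕ) = (j:ℕ) + 1 ∨ ((j:ℕ) + 1 = n ∧ (k:ℕ) = 0)
        then (↑((((j:ℕ):ℝ)+1)/n) : AddCircle (1:ℝ)) else ↑(((j:ℕ):ℝ)/n)) := by
    rintro j k hjk z ⟨⟨s, hs⟩, ⟨t, ht⟩⟩
    rw [he] at hs ht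
    have h := hs.trans ht.symm
    rw [hcoe, div_sub_div_same] at h
    obtain ⟨m, hm⟩ := h
    have hm' : (((j:ℕ):ℝ) + s) - (((k:ℕ):ℝ) + t) = m * n := (div_eq_iff hnR.ne').1 hm
    have hs01 := s.2.1; have hs02 := s.2.2
    have ht01 := t.2.1; have ht02 := t.2.2
    have hj1 := hjb j; have hj0 := hjb0 j
    have hk1 := hjb k; have hk0 := hjb0 k
    have hvk : (j:ℕ) ≠ (k:ℕ) := fun h => hjk (Fin.ext h)
    rcases hle1 m (by rw [abs_le]; constructor <;> linarith) with hm1 | hm1 | hm1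
    · -- m = -1 : j = 0, s = 0, k = n-1, t = 1
      rw [hm1] at hm'; push_cast at hm'
      have hJ : ((j:ℕ):ℝ) = 0 := by linarith
      have hK : ((k:ℕ):ℝ) = (n:ℝ) - 1 := by linarith
      have hsv : (s:ℝ) = 0 := by linarith
      have htv : (t:ℝ) = 1 := by linarith
      have hz1 : z = e j 0 := by rw [he0, ← hs]; norm_num [hsv]
      have hz2 : z = e k 1 := by rw [he1, ← ht]; norm_num [htv]
      have hcond : ¬((k:ℕ) = (j:ℕ) + 1 ∨ ((j:ℕ) + 1 = n ∧ (k:ℕ) = 0)) := by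
        have hJ' : (j:ℕ) = 0 := by exact_mod_cast hJ
        have hK' : ((k:ℕ):ℝ) + 1 = n := by linarith
        have hK'' : (k:ℕ) + 1 = n := by exact_mod_cast hK'
        omega
      refine ⟨⟨Or.inl hz1, Or.inr hz2⟩, ?_⟩
      rw [if_neg hcond, hz1, he0]
    · -- m = 0
      rw [hm1] at hm'; push_cast at hm'
      have hd : ((j:ℕ):ℤ) - (k:ℕ) = 1 ∨ ((j:ℕ):ℤ) - (k:ℕ) = -1 := by
        have h1 : ((((j:ℕ):ℤ) - ((k:ℕ):ℤ)) : ℝ) ≤ 1 := by push_cast; linarith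
        have h2 : (-1:ℝ) ≤ ((((j:ℕ):ℤ) - ((k:ℕ):ℤ)) : ℝ) := by push_cast; linarith
        have h1' : ((j:ℕ):ℤ) - ((k:ℕ):ℤ) ≤ 1 := by exact_mod_cast h1
        have h2' : (-1:ℤ) ≤ ((j:ℕ):ℤ) - ((k:ℕ):ℤ) := by exact_mod_cast h2
        have h3 : ((j:ℕ):ℤ) ≠ ((k:ℕ):ℤ) := by exact_mod_cast hvk
        omega
      rcases hd with hd | hd
      · -- j = k+1 : s = 0, t = 1
        have hJ : ((j:ℕ):ℝ) = ((k:ℕ):ℝ) + 1 := by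
          have : ((j:ℕ):ℤ) = ((k:ℕ):ℤ) + 1 := by omega
          exact_mod_cast this
        have hsv : (s:ℝ) = 0 := by linarith
        have htv : (t:ℝ) = 1 := by linarith
        have hz1 : z = e j 0 := by rw [he0, ← hs]; norm_num [hsv]
        have hz2 : z = e k 1 := by rw [he1, ← ht]; norm_num [htv]
        have hcond : ¬((k:ℕ) = (j:ℕ) + 1 ∨ ((j:ℕ) + 1 = n ∧ (k:ℕ) = 0)) := by
          have hd' : (j:ℕ) = (k:ℕ) + 1 := by omega
          have hjlt := j.isLt
          have hklt := k.isLt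
          omega
        refine ⟨⟨Or.inl hz1, Or.inr hz2⟩, ?_⟩
        rw [if_neg hcond, hz1, he0]
      · -- k = j+1 : s = 1, t = 0
        have hJ : ((k:ℕ):ℝ) = ((j:ℕ):ℝ) + 1 := by
          have : ((k:ℕ):ℤ) = ((j:ℕ):ℤ) + 1 := by omega
          exact_mod_cast this
        have hsv : (s:ℝ) = 1 := by linarith
        have htv : (t:ℝ) = 0 := by linarith
        have hz1 : z = e j 1 := by rw [he1, ← hs]; norm_num [hsv]
        have hz2 : z = e k 0 := by rw [he0, ← ht]; norm_num [htv]
        have hcond : (k:ℕ) = (j:ℕ) + 1 ∨ ((j:ℕ) + 1 = n ∧ (k:ℕ) = 0) :=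
          Or.inl (by exact_mod_cast hJ)
        refine ⟨⟨Or.inr hz1, Or.inl hz2⟩, ?_⟩
        rw [if_pos hcond, hz1, he1]
    · -- m = 1 : j = n-1, s = 1, k = 0, t = 0
      rw [hm1] at hm'; push_cast at hm'
      have hK : ((k:ℕ):ℝ) = 0 := by linarith
      have hJ : ((j:ℕ):ℝ) = (n:ℝ) - 1 := by linarith
      have hsv : (s:ℝ) = 1 := by linarith
      have htv : (t:ℝ) = 0 := by linarith
      have hz1 : z = e j 1 := by rw [he1, ← hs]; norm_num [hsv]
      have hz2 : z = e k 0 := by rw [he0, ← ht]; norm_num [htv]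
      have hcond : (k:ℕ) = (j:ℕ) + 1 ∨ ((j:ℕ) + 1 = n ∧ (k:ℕ) = 0) := by
        right
        constructor
        · have : ((j:ℕ):ℝ) + 1 = n := by linarith
          exact_mod_cast this
        · exact_mod_cast hK
      refine ⟨⟨Or.inr hz1, Or.inl hz2⟩, ?_⟩
      rw [if_pos hcond, hz1, he1]
  refine ⟨n, hn3, e, hemb, ?_, ?_, ?_⟩
  · -- coverage
    rw [eq_univ_iff_forall]
    intro z
    induction z using QuotientAddGroup.induction_on with
    | H r =>
    have hx : ((Int.fract r : ℝ) : AddCircle (1:ℝ)) = ↑r := by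
      rw [hcoe]
      exact ⟨-⌊r⌋, by push_cast; exact Int.fract_sub_self r⟩
    set x := Int.fract r with hxdef
    have hx0 : (0:ℝ) ≤ x := Int.fract_nonneg r
    have hx1 : x < 1 := Int.fract_lt_one r
    set j0 : ℕ := ⌊(n:ℝ) * x⌋₊ with hj0def
    have hj0 : j0 < n := by
      have h1 : (n:ℝ) * x < n := by nlinarith
      exact (Nat.floor_lt (by positivity)).2 h1
    have ht0 : (0:ℝ) ≤ (n:ℝ)*x - j0 := sub_nonneg.2 (Nat.floor_le (by positivity))
    have ht1 : (n:ℝ)*x - j0 ≤ 1 := by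
      have := Nat.lt_floor_add_one ((n:ℝ)*x); linarith
    refine mem_iUnion.2 ⟨⟨j0, hj0⟩, ⟨⟨(n:ℝ)*x - j0, ht0, ht1⟩, ?_⟩⟩
    rw [he, ← hx]
    congr 1
    simp only [Fin.val_mk]
    rw [div_eq_iff hnR.ne']
    ring
  · -- intersections
    intro j k hjk
    exact ⟨fun z hz => (hkey j k hjk z hz).1,
      fun z hz z' hz' => by rw [(hkey j k hjk z hz).2, (hkey j k hjk z' hz').2]⟩
  · -- disjoint from g-image
    intro j
    rw [eq_empty_iff_forall_notMem]
    rintro z ⟨⟨w, ⟨s, hs⟩, rfl⟩, ⟨t, ht⟩⟩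
    have hb : ‖g w - w‖ ≤ 1/n := by
      rw [← ht, ← hs, he, he, ← AddCircle.coe_sub]
      refine (hnorm _).trans ?_
      rw [div_sub_div_same, show (((j:ℕ):ℝ) + t) - (((j:ℕ):ℝ) + s) = (t:ℝ) - s by ring,
        abs_div, abs_of_pos hnR]
      have habs : |(t:ℝ) - s| ≤ 1 := by
        rw [abs_le]
        exact ⟨by linarith [t.2.1, s.2.2], by linarith [t.2.2, s.2.1]⟩
      gcongr
    linarith [hmin w, h1n, hb]
end
end

section
/- Let φ: ℝ → ℝ be an increasing homeomorphism such that φ(x+1) = φ(x) + 1 for every x ∈ ℝ and x < φ(x) < x + 1 for every x ∈ ℝ. Then there exists a strictly increasing sequence (aₙ)_{n∈ℤ} of real numbers with lim_{n→±∞} aₙ = ±∞, such that the set {aₙ : n ∈ ℤ} is invariant under translation by 1, and for every n ∈ ℤ one has aₙ₊₁ < φ(aₙ) ≤ aₙ₊₂ (equivalently: φ([aₙ, aₙ₊₁]) is disjoint from [aₙ, aₙ₊₁] but meets [aₙ₊₁, aₙ₊₂]). -/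
noncomputable section

open Set Filter

namespace Stmt9Aux

/-- The periodic pattern: `X 0 = p`, `X (2j+1) = φ^[j] a`, `X (2j+2) = φ^[j] r`. -/
def Xf (φ : ℝ ≃ₜ ℝ) (p a r : ℝ) (s : ℕ) : ℝ :=
  if s % 2 = 1 then (⇑φ)^[s / 2] a else if s = 0 then p else (⇑φ)^[s / 2 - 1] r

/-- The bi-infinite sequence obtained by extending the pattern by integer translation. -/
def seqf (φ : ℝ ≃ₜ ℝ) (p a r : ℝ) (M : ℕ) (k : ℤ) : ℝ :=
  Xf φ p a r (k % (M : ℤ)).toNat + ((k / (M : ℤ) : ℤ) : ℝ)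

variable (φ : ℝ ≃ₜ ℝ) (p a r : ℝ)

lemma Xval0 : Xf φ p a r 0 = p := by simp [Xf]

lemma Xval1 (j : ℕ) : Xf φ p a r (2 * j + 1) = (⇑φ)^[j] a := by
  have h1 : (2 * j + 1) % 2 = 1 := by omega
  have h2 : (2 * j + 1) / 2 = j := by omega
  simp [Xf, h1, h2]

lemma Xval2 (j : ℕ) : Xf φ p a r (2 * j + 2) = (⇑φ)^[j] r := by
  have h1 : (2 * j + 2) % 2 = 0 := by omega
  have h2 : (2 * j + 2) / 2 - 1 = j := by omega
  simp [Xf, h1, h2]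

lemma parity_cases (s : ℕ) : s = 0 ∨ (∃ j, s = 2 * j + 1) ∨ ∃ j, s = 2 * j + 2 := by
  rcases Nat.even_or_odd s with ⟨j, hj⟩ | ⟨j, hj⟩
  · rcases Nat.eq_zero_or_pos j with rfl | hpos
    · left; omega
    · right; right; exact ⟨j - 1, by omega⟩
  · right; left; exact ⟨j, by omega⟩

lemma symm_mono (hmono : StrictMono ⇑φ) : StrictMono ⇑φ.symm := by
  intro x y hxy
  by_contra hcon
  push_neg at hcon
  have h2 := hmono.le_iff_le.mpr hcon
  rw [φ.apply_symm_apply, φ.apply_symm_apply] at h2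
  exact absurd hxy (not_lt.mpr h2)

lemma map_add_int (hper : ∀ x : ℝ, φ (x + 1) = φ x + 1) :
    ∀ (x : ℝ) (q : ℤ), φ (x + q) = φ x + q := by
  intro x q
  induction q using Int.induction_on with
  | zero => simp
  | succ i ih =>
      have e : (x + ((i : ℤ) + 1 : ℤ)) = (x + (i : ℤ)) + 1 := by push_cast; ring
      rw [e, hper, ih]; push_cast; ring
  | pred i ih =>
      have key := hper (x + (-(i : ℤ) - 1 : ℤ))
      have e : (x + (-(i : ℤ) - 1 : ℤ)) + 1 = x + (-(i : ℤ) : ℤ) := by push_cast; ring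
      rw [e, ih] at key
      have e2 : φ (x + (-(i : ℤ) - 1 : ℤ)) = φ x + (-(i : ℤ) : ℝ) - 1 := by
        push_cast at key ⊢; linarith
      rw [e2]; push_cast; ring

lemma iter_add_one (hper : ∀ x : ℝ, φ (x + 1) = φ x + 1) (m : ℕ) (x : ℝ) :
    (⇑φ)^[m] (x + 1) = (⇑φ)^[m] x + 1 := by
  induction m with
  | zero => simp
  | succ n ih => rw [Function.iterate_succ_apply', Function.iterate_succ_apply', ih, hper]

lemma exists_delta (hper : ∀ x : ℝ, φ (x + 1) = φ x + 1)
    (hfree : ∀ x : ℝ, x < φ x ∧ φ x < x + 1) :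
    ∃ δ : ℝ, 0 < δ ∧ ∀ x : ℝ, x + δ ≤ φ x := by
  obtain ⟨x₀, hx₀, hmin⟩ := isCompact_Icc.exists_isMinOn (nonempty_Icc.mpr zero_le_one)
    ((φ.continuous.sub continuous_id).continuousOn (s := Icc (0:ℝ) 1))
  refine ⟨φ x₀ - x₀, by have := (hfree x₀).1; linarith, ?_⟩
  intro x
  have hfr : Int.fract x ∈ Icc (0:ℝ) 1 :=
    ⟨Int.fract_nonneg x, le_of_lt (Int.fract_lt_one x)⟩
  have h1 : φ x₀ - x₀ ≤ φ (Int.fract x) - Int.fract x :=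
    isMinOn_iff.mp hmin (Int.fract x) hfr
  have e : Int.fract x + (⌊x⌋ : ℝ) = x := by
    rw [← Int.self_sub_floor x]; ring
  have h3 := map_add_int φ hper (Int.fract x) ⌊x⌋
  rw [e] at h3
  have h2 : φ (Int.fract x) - Int.fract x = φ x - x := by
    rw [h3]; linarith
  linarith

lemma iter_growth (δ : ℝ) (hδ : ∀ x : ℝ, x + δ ≤ φ x) :
    ∀ (m : ℕ) (x : ℝ), x + m * δ ≤ (⇑φ)^[m] x := by
  intro m
  induction m with
  | zero => intro x; simp
  | succ n ih =>
      intro x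
      rw [Function.iterate_succ_apply']
      have h1 := ih x
      have h2 := hδ ((⇑φ)^[n] x)
      push_cast
      nlinarith [h1, h2]

lemma iter_strict_pos (δ : ℝ) (hδpos : 0 < δ) (hδ : ∀ x : ℝ, x + δ ≤ φ x)
    (m : ℕ) (hm : 1 ≤ m) (x : ℝ) : x < (⇑φ)^[m] x := by
  have hg := iter_growth φ δ hδ m x
  have hm' : (1 : ℝ) ≤ (m : ℝ) := by exact_mod_cast hm
  nlinarith

/-- Core combinatorial construction. -/
theorem build (hmono : StrictMono ⇑φ) (hper : ∀ x : ℝ, φ (x + 1) = φ x + 1) (n' : ℕ)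
    (h1 : (⇑φ)^[n' + 1] p ≤ p + 1)
    (h2 : (⇑φ.symm)^[n' + 1] (p + 1) < a)
    (h3 : a < φ p)
    (h4 : (⇑φ)^[n' + 1] a ≤ a + 1) :
    ∃ b : ℤ → ℝ, StrictMono b ∧
      Filter.Tendsto b Filter.atTop Filter.atTop ∧
      Filter.Tendsto b Filter.atBot Filter.atBot ∧
      (∀ n : ℤ, b n + 1 ∈ Set.range b ∧ b n - 1 ∈ Set.range b) ∧
      (∀ n : ℤ, b (n + 1) < φ (b n) ∧ φ (b n) ≤ b (n + 2)) := by
  classical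
  have hψmono : StrictMono ⇑φ.symm := symm_mono φ hmono
  have li : Function.LeftInverse ⇑φ.symm ⇑φ := φ.symm_apply_apply
  have ri : Function.LeftInverse ⇑φ ⇑φ.symm := φ.apply_symm_apply
  set rr : ℝ := (⇑φ.symm)^[n'] (p + 1) with hrr
  -- basic facts
  have fact_r : (⇑φ)^[n'] rr = p + 1 := (ri.iterate n') (p + 1)
  have F5 : φ p ≤ rr := by
    have e : (⇑φ)^[n'] (φ p) = (⇑φ)^[n' + 1] p := (Function.iterate_succ_apply (⇑φ) n' p).symm
    have h' : (⇑φ)^[n'] (φ p) ≤ (⇑φ)^[n'] rr := by rw [e, fact_r]; exact h1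
    exact ((hmono.iterate n').le_iff_le).mp h'
  have hpsi_r : φ.symm rr < a := by
    have e : (⇑φ.symm)^[n' + 1] (p + 1) = φ.symm rr := by
      rw [hrr, ← Function.iterate_succ_apply' (⇑φ.symm) n' (p + 1)]
    rw [← e]; exact h2
  have F3 : rr < φ a := by
    have h' := hmono hpsi_r
    rwa [ri rr] at h'
  have F1 : p < a := by
    have hp_le : p ≤ (⇑φ.symm)^[n' + 1] (p + 1) := by
      have h' : (⇑φ.symm)^[n' + 1] ((⇑φ)^[n' + 1] p) ≤ (⇑φ.symm)^[n' + 1] (p + 1) :=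
        (hψmono.iterate (n' + 1)).le_iff_le.mpr h1
      rwa [(li.iterate (n' + 1)) p] at h'
    exact lt_of_le_of_lt hp_le h2
  have F2 : a < rr := lt_of_lt_of_le h3 F5
  have F6 : p + 1 < (⇑φ)^[n' + 1] a := by
    have h' := (hmono.iterate (n' + 1)) h2
    rwa [(ri.iterate (n' + 1)) (p + 1)] at h'
  have A1 : ∀ j, (⇑φ)^[j] a < (⇑φ)^[j] rr := fun j => (hmono.iterate j) F2
  have A2 : ∀ j, (⇑φ)^[j] rr < (⇑φ)^[j + 1] a := by
    intro j
    have h' := (hmono.iterate j) F3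
    rwa [← Function.iterate_succ_apply (⇑φ) j a] at h'
  -- pattern inequalities
  have Xstep : ∀ s, Xf φ p a rr s < Xf φ p a rr (s + 1) := by
    intro s
    rcases parity_cases s with rfl | ⟨j, rfl⟩ | ⟨j, rfl⟩
    · have e1 : Xf φ p a rr 1 = a := by
        have h' := Xval1 φ p a rr 0; simpa using h'
      rw [Xval0, e1]; exact F1
    · have e2 : Xf φ p a rr (2 * j + 1 + 1) = (⇑φ)^[j] rr := by
        have e : 2 * j + 1 + 1 = 2 * j + 2 := by omega
        rw [e, Xval2]
      rw [Xval1, e2]; exact A1 j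
    · have e2 : Xf φ p a rr (2 * j + 2 + 1) = (⇑φ)^[j + 1] a := by
        have e : 2 * j + 2 + 1 = 2 * (j + 1) + 1 := by omega
        rw [e, Xval1]
      rw [Xval2, e2]; exact A2 j
  have Xcond1 : ∀ s, Xf φ p a rr (s + 1) < φ (Xf φ p a rr s) := by
    intro s
    rcases parity_cases s with rfl | ⟨j, rfl⟩ | ⟨j, rfl⟩
    · have e1 : Xf φ p a rr 1 = a := by
        have h' := Xval1 φ p a rr 0; simpa using h'
      rw [Xval0, e1]; exact h3
    · have e2 : Xf φ p a rr (2 * j + 1 + 1) = (⇑φ)^[j] rr := by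
        have e : 2 * j + 1 + 1 = 2 * j + 2 := by omega
        rw [e, Xval2]
      rw [Xval1, e2, ← Function.iterate_succ_apply' (⇑φ) j a]
      exact A2 j
    · have e2 : Xf φ p a rr (2 * j + 2 + 1) = (⇑φ)^[j + 1] a := by
        have e : 2 * j + 2 + 1 = 2 * (j + 1) + 1 := by omega
        rw [e, Xval1]
      rw [Xval2, e2, ← Function.iterate_succ_apply' (⇑φ) j rr]
      exact A1 (j + 1)
  have Xcond2 : ∀ s, φ (Xf φ p a rr s) ≤ Xf φ p a rr (s + 2) := by
    intro s
    rcases parity_cases s with rfl | ⟨j, rfl⟩ | ⟨j, rfl⟩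
    · have e2 : Xf φ p a rr 2 = rr := by
        have h' := Xval2 φ p a rr 0; simpa using h'
      rw [Xval0, e2]; exact F5
    · have e2 : Xf φ p a rr (2 * j + 1 + 2) = (⇑φ)^[j + 1] a := by
        have e : 2 * j + 1 + 2 = 2 * (j + 1) + 1 := by omega
        rw [e, Xval1]
      rw [Xval1, e2, ← Function.iterate_succ_apply' (⇑φ) j a]
    · have e2 : Xf φ p a rr (2 * j + 2 + 2) = (⇑φ)^[j + 1] rr := by
        have e : 2 * j + 2 + 2 = 2 * (j + 1) + 2 := by omega
        rw [e, Xval2]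
      rw [Xval2, e2, ← Function.iterate_succ_apply' (⇑φ) j rr]
  -- period
  set M : ℕ := 2 * n' + 2 with hM
  have hMpos : (0 : ℤ) < (M : ℤ) := by positivity
  have hMne : (M : ℤ) ≠ 0 := by omega
  have XM : Xf φ p a rr M = p + 1 := by
    rw [hM, Xval2]; exact fact_r
  have XM1 : Xf φ p a rr (M - 1) = (⇑φ)^[n'] a := by
    have e : M - 1 = 2 * n' + 1 := by omega
    rw [e, Xval1]
  have X1 : Xf φ p a rr 1 = a := by
    have h' := Xval1 φ p a rr 0; simpa using h'
  -- wrap facts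
  have W1 : Xf φ p a rr (M - 1) < p + 1 := by
    have h' := Xstep (M - 1)
    have e : M - 1 + 1 = M := by omega
    rwa [e, XM] at h'
  have W2 : p + 1 < φ (Xf φ p a rr (M - 1)) := by
    rw [XM1, ← Function.iterate_succ_apply' (⇑φ) n' a]; exact F6
  have W3 : φ (Xf φ p a rr (M - 1)) ≤ a + 1 := by
    rw [XM1, ← Function.iterate_succ_apply' (⇑φ) n' a]; exact h4
  have W4 : φ (Xf φ p a rr (M - 2)) ≤ p + 1 := by
    have h' := Xcond2 (M - 2)
    have e : M - 2 + 2 = M := by omega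
    rwa [e, XM] at h'
  -- the sequence
  set b : ℤ → ℝ := seqf φ p a rr M with hb
  have seq_eq : ∀ (q s : ℤ), 0 ≤ s → s < (M : ℤ) →
      b ((M : ℤ) * q + s) = Xf φ p a rr s.toNat + (q : ℝ) := by
    intro q s h0 h1'
    have e1 : ((M : ℤ) * q + s) % (M : ℤ) = s := by
      rw [add_comm, Int.add_mul_emod_self_left, Int.emod_eq_of_lt h0 h1']
    have e2 : ((M : ℤ) * q + s) / (M : ℤ) = q := by
      rw [add_comm, Int.add_mul_ediv_left _ _ hMne, Int.ediv_eq_zero_of_lt h0 h1', zero_add]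
    rw [hb]; unfold seqf
    rw [e1, e2]
  have decomp : ∀ k : ℤ, ∃ q s : ℤ, 0 ≤ s ∧ s < (M : ℤ) ∧ k = (M : ℤ) * q + s := by
    intro k
    exact ⟨k / (M : ℤ), k % (M : ℤ), Int.emod_nonneg k hMne, Int.emod_lt_of_pos k hMpos,
      (Int.mul_ediv_add_emod k (M : ℤ)).symm⟩
  -- strict monotonicity
  have hmono_b : StrictMono b := by
    apply strictMono_int_of_lt_succ
    intro k
    obtain ⟨q, s, hs0, hsM, rfl⟩ := decomp k
    by_cases hcase : s + 1 < (M : ℤ)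
    · have e : (M : ℤ) * q + s + 1 = (M : ℤ) * q + (s + 1) := by ring
      rw [e, seq_eq q (s + 1) (by omega) hcase, seq_eq q s hs0 hsM]
      have et : (s + 1).toNat = s.toNat + 1 := by omega
      rw [et]
      have h' := Xstep s.toNat
      linarith
    · have hsM1 : s = (M : ℤ) - 1 := by omega
      have e : (M : ℤ) * q + s + 1 = (M : ℤ) * (q + 1) + 0 := by rw [hsM1]; ring
      rw [e, seq_eq (q + 1) 0 le_rfl (by omega), seq_eq q s hs0 hsM]
      have et : s.toNat = M - 1 := by omega
      rw [et]
      simp only [Int.toNat_zero, Xval0]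
      push_cast
      linarith [W1]
  -- translation invariance helpers
  have shift_up : ∀ k : ℤ, b (k + (M : ℤ)) = b k + 1 := by
    intro k
    obtain ⟨q, s, hs0, hsM, rfl⟩ := decomp k
    have e : (M : ℤ) * q + s + (M : ℤ) = (M : ℤ) * (q + 1) + s := by ring
    rw [e, seq_eq (q + 1) s hs0 hsM, seq_eq q s hs0 hsM]
    push_cast; ring
  have shift_down : ∀ k : ℤ, b (k - (M : ℤ)) = b k - 1 := by
    intro k
    have h' := shift_up (k - (M : ℤ))
    have e : k - (M : ℤ) + (M : ℤ) = k := by ring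
    rw [e] at h'
    linarith
  refine ⟨b, hmono_b, ?_, ?_, ?_, ?_⟩
  · apply hmono_b.monotone.tendsto_atTop_atTop
    intro c
    refine ⟨(M : ℤ) * ⌈c - p⌉, ?_⟩
    rw [show (M : ℤ) * ⌈c - p⌉ = (M : ℤ) * ⌈c - p⌉ + 0 from by ring,
      seq_eq ⌈c - p⌉ 0 le_rfl (by omega)]
    simp only [Int.toNat_zero, Xval0]
    have h' := Int.le_ceil (c - p)
    linarith
  · apply hmono_b.monotone.tendsto_atBot_atBot
    intro c
    refine ⟨(M : ℤ) * ⌊c - p⌋, ?_⟩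
    rw [show (M : ℤ) * ⌊c - p⌋ = (M : ℤ) * ⌊c - p⌋ + 0 from by ring,
      seq_eq ⌊c - p⌋ 0 le_rfl (by omega)]
    simp only [Int.toNat_zero, Xval0]
    have h' := Int.floor_le (c - p)
    linarith
  · intro k
    constructor
    · exact ⟨k + (M : ℤ), shift_up k⟩
    · exact ⟨k - (M : ℤ), shift_down k⟩
  · intro k
    obtain ⟨q, s, hs0, hsM, rfl⟩ := decomp k
    rw [seq_eq q s hs0 hsM]
    have hφb : φ (Xf φ p a rr s.toNat + (q : ℝ)) = φ (Xf φ p a rr s.toNat) + (q : ℝ) :=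
      map_add_int φ hper _ q
    rw [hφb]
    by_cases hc1 : s + 2 < (M : ℤ)
    · -- no wrap
      have e1 : (M : ℤ) * q + s + 1 = (M : ℤ) * q + (s + 1) := by ring
      have e2 : (M : ℤ) * q + s + 2 = (M : ℤ) * q + (s + 2) := by ring
      rw [e1, e2, seq_eq q (s + 1) (by omega) (by omega), seq_eq q (s + 2) (by omega) hc1]
      have et1 : (s + 1).toNat = s.toNat + 1 := by omega
      have et2 : (s + 2).toNat = s.toNat + 2 := by omega
      rw [et1, et2]
      exact ⟨by linarith [Xcond1 s.toNat], by linarith [Xcond2 s.toNat]⟩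
    · by_cases hc2 : s + 2 = (M : ℤ)
      · -- second wraps
        have e1 : (M : ℤ) * q + s + 1 = (M : ℤ) * q + (s + 1) := by ring
        have e2 : (M : ℤ) * q + s + 2 = (M : ℤ) * (q + 1) + 0 := by linear_combination hc2
        rw [e1, e2, seq_eq q (s + 1) (by omega) (by omega), seq_eq (q + 1) 0 le_rfl (by omega)]
        have et1 : (s + 1).toNat = s.toNat + 1 := by omega
        have etM : s.toNat = M - 2 := by omega
        rw [et1]
        simp only [Int.toNat_zero, Xval0]
        constructor
        · linarith [Xcond1 s.toNat]
        · rw [etM]; push_cast; linarith [W4]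
      · -- both wrap : s = M - 1
        have hsM1 : s = (M : ℤ) - 1 := by omega
        have e1 : (M : ℤ) * q + s + 1 = (M : ℤ) * (q + 1) + 0 := by linear_combination hsM1
        have e2 : (M : ℤ) * q + s + 2 = (M : ℤ) * (q + 1) + 1 := by linear_combination hsM1
        rw [e1, e2, seq_eq (q + 1) 0 le_rfl (by omega), seq_eq (q + 1) 1 (by omega) (by omega)]
        have etM : s.toNat = M - 1 := by omega
        rw [etM]
        simp only [Int.toNat_zero, Int.toNat_one, Xval0, X1]
        constructor
        · push_cast; linarith [W2]
        · push_cast; linarith [W3]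

/-- Existence of the data `(n', p, a)` needed by `build`. -/
theorem exists_data (hmono : StrictMono ⇑φ) (hper : ∀ x : ℝ, φ (x + 1) = φ x + 1)
    (hfree : ∀ x : ℝ, x < φ x ∧ φ x < x + 1) :
    ∃ (n' : ℕ) (p a : ℝ),
      (⇑φ)^[n' + 1] p ≤ p + 1 ∧ (⇑φ.symm)^[n' + 1] (p + 1) < a ∧ a < φ p ∧
      (⇑φ)^[n' + 1] a ≤ a + 1 := by
  classical
  obtain ⟨δ, hδpos, hδ⟩ := exists_delta φ hper hfree
  have li : Function.LeftInverse ⇑φ.symm ⇑φ := φ.symm_apply_apply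
  have ri : Function.LeftInverse ⇑φ ⇑φ.symm := φ.apply_symm_apply
  -- for every p there is n' with φ^[n'+1] p ≤ p+1 < φ^[n'+2] p
  have np : ∀ p : ℝ, ∃ n' : ℕ, (⇑φ)^[n' + 1] p ≤ p + 1 ∧ p + 1 < (⇑φ)^[n' + 2] p := by
    intro p
    have hex : ∃ m : ℕ, p + 1 < (⇑φ)^[m] p := by
      obtain ⟨N, hN⟩ := exists_nat_gt (1 / δ)
      refine ⟨N, ?_⟩
      have h1 : 1 < (N : ℝ) * δ := by
        rw [div_lt_iff₀ hδpos] at hN; linarith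
      have h2 := iter_growth φ δ hδ N p
      linarith
    have hge : 1 < Nat.find hex := by
      rw [Nat.lt_find_iff]
      intro n hn
      interval_cases n
      · simp only [Function.iterate_zero_apply]
        push_neg
        linarith
      · simp only [Function.iterate_one]
        push_neg
        linarith [(hfree p).2]
    have hspec := Nat.find_spec hex
    have hnot := Nat.find_min hex (m := Nat.find hex - 1) (by omega)
    push_neg at hnot
    refine ⟨Nat.find hex - 2, ?_, ?_⟩
    · have e : Nat.find hex - 2 + 1 = Nat.find hex - 1 := by omega
      rw [e]; exact hnot
    · have e : Nat.find hex - 2 + 2 = Nat.find hex := by omega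
      rw [e]; exact hspec
  by_cases hcase : ∃ (p : ℝ) (n' : ℕ),
      (⇑φ)^[n' + 1] p < p + 1 ∧ p + 1 < (⇑φ)^[n' + 2] p
  · obtain ⟨p, n', hlt, hgt⟩ := hcase
    set u : ℝ := (⇑φ.symm)^[n' + 1] (p + 1) with hu
    have hiter_u : (⇑φ)^[n' + 1] u = p + 1 := (ri.iterate (n' + 1)) (p + 1)
    have hψmono : StrictMono ⇑φ.symm := symm_mono φ hmono
    have hu_lt : u < φ p := by
      have h' : (⇑φ.symm)^[n' + 1] (p + 1) < (⇑φ.symm)^[n' + 1] ((⇑φ)^[n' + 2] p) :=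
        (hψmono.iterate (n' + 1)) hgt
      have e : (⇑φ)^[n' + 2] p = (⇑φ)^[n' + 1] (φ p) :=
        Function.iterate_succ_apply (⇑φ) (n' + 1) p
      rw [e, (li.iterate (n' + 1)) (φ p)] at h'
      exact h'
    have hp_lt_u : p < u := by
      have h' : (⇑φ.symm)^[n' + 1] ((⇑φ)^[n' + 1] p) < (⇑φ.symm)^[n' + 1] (p + 1) :=
        (hψmono.iterate (n' + 1)) hlt
      rwa [(li.iterate (n' + 1)) p] at h'
    have hGu : (⇑φ)^[n' + 1] u - u < 1 := by rw [hiter_u]; linarith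
    have hcont : ContinuousAt (fun x => (⇑φ)^[n' + 1] x - x) u :=
      ((φ.continuous.iterate (n' + 1)).sub continuous_id).continuousAt
    have ev1 : ∀ᶠ x in nhdsWithin u (Set.Ioi u), (⇑φ)^[n' + 1] x - x < 1 :=
      (hcont.eventually_lt continuousAt_const hGu).filter_mono nhdsWithin_le_nhds
    have ev2 : ∀ᶠ x in nhdsWithin u (Set.Ioi u), x ∈ Set.Ioo u (φ p) :=
      Filter.eventually_of_mem (Ioo_mem_nhdsGT_of_mem ⟨le_rfl, hu_lt⟩) fun x hx => hx
    obtain ⟨a, ha1, ha2⟩ := (ev1.and ev2).exists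
    exact ⟨n', p, a, le_of_lt hlt, ha2.1, ha2.2, by linarith [ha1]⟩
  · -- degenerate case: φ^[n(p)+1] p = p + 1 for every p; partition argument
    push_neg at hcase
    have heq : ∀ p : ℝ, ∃ n' : ℕ, (⇑φ)^[n' + 1] p = p + 1 := by
      intro p
      obtain ⟨n', hle, hgt⟩ := np p
      refine ⟨n', le_antisymm hle ?_⟩
      by_contra hcon
      push_neg at hcon
      exact absurd hgt (not_lt.mpr (hcase p n' hcon))
    -- bound on n'
    obtain ⟨N, hN⟩ := exists_nat_gt (1 / δ)
    have hbound : ∀ (t : ℕ) (x : ℝ), (⇑φ)^[t + 1] x = x + 1 → t < N := by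
      intro t x hx
      have hg := iter_growth φ δ hδ (t + 1) x
      rw [hx] at hg
      have h1 : ((t : ℝ) + 1) * δ ≤ 1 := by push_cast at hg; linarith
      have h2 : 1 < (N : ℝ) * δ := by rw [div_lt_iff₀ hδpos] at hN; linarith
      have h3 : ((t : ℝ) + 1) < (N : ℝ) := by
        by_contra hc
        push_neg at hc
        have h4 : (N : ℝ) * δ ≤ ((t : ℝ) + 1) * δ :=
          mul_le_mul_of_nonneg_right hc (le_of_lt hδpos)
        linarith
      have h5 : ((t + 1 : ℕ) : ℝ) < (N : ℝ) := by push_cast; linarith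
      have h6 := Nat.cast_lt.mp h5
      omega
    set S : ℕ → Set ℝ := fun t => {x | (⇑φ)^[t + 1] x = x + 1} with hS
    have hScl : ∀ t, IsClosed (S t) :=
      fun t => isClosed_eq (φ.continuous.iterate (t + 1)) (continuous_id.add continuous_const)
    have hdisj : ∀ (s t : ℕ) (x : ℝ), x ∈ S s → x ∈ S t → s = t := by
      intro s t x hxs hxt
      by_contra hne
      wlog hst : s < t generalizing s t
      · exact this t s hxt hxs (Ne.symm hne) (by omega)
      have hx1 : (⇑φ)^[s + 1] x = x + 1 := hxs
      have hx2 : (⇑φ)^[t + 1] x = x + 1 := hxt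
      have e : (⇑φ)^[t + 1] x = (⇑φ)^[t - s] ((⇑φ)^[s + 1] x) := by
        rw [← Function.iterate_add_apply]
        congr 1
        omega
      rw [hx1, iter_add_one φ hper (t - s) x, hx2] at e
      have e3 : (⇑φ)^[t - s] x = x := by linarith
      have hfix := iter_strict_pos φ δ hδpos hδ (t - s) (by omega) x
      rw [e3] at hfix
      exact lt_irrefl x hfix
    obtain ⟨t₀, ht₀⟩ := heq 0
    have hU : S t₀ = Set.univ := by
      have hclopen : IsClopen (S t₀) := by
        constructor
        · exact hScl t₀
        · rw [← isClosed_compl_iff]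
          have hcompl : (S t₀)ᶜ = ⋃ t ∈ (Finset.range N).erase t₀, S t := by
            ext x
            simp only [Set.mem_compl_iff, Set.mem_iUnion, exists_prop, Finset.mem_erase,
              Finset.mem_range]
            constructor
            · intro hx
              obtain ⟨t, ht⟩ := heq x
              refine ⟨t, ⟨?_, hbound t x ht⟩, ht⟩
              intro h
              exact hx (h ▸ ht)
            · rintro ⟨t, ⟨hne, _⟩, hxt⟩ hx0
              exact hne (hdisj t t₀ x hxt hx0)
          rw [hcompl]
          exact Set.Finite.isClosed_biUnion ((Finset.range N).erase t₀).finite_toSet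
            fun t _ => hScl t
      rcases isClopen_iff.mp hclopen with h | h
      · have hmem : (0 : ℝ) ∈ S t₀ := ht₀
        rw [h] at hmem
        exact absurd hmem (Set.notMem_empty _)
      · exact h
    have hall : ∀ x : ℝ, (⇑φ)^[t₀ + 1] x = x + 1 := by
      intro x
      have hx : x ∈ S t₀ := hU ▸ Set.mem_univ x
      exact hx
    refine ⟨t₀, 0, φ 0 / 2, ?_, ?_, ?_, ?_⟩
    · rw [hall 0]
    · have h0 : (⇑φ)^[t₀ + 1] (0 : ℝ) = 1 := by rw [hall 0]; ring
      have hinv : (⇑φ.symm)^[t₀ + 1] ((0 : ℝ) + 1) = 0 := by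
        rw [show (0 : ℝ) + 1 = 1 from by ring, ← h0, (li.iterate (t₀ + 1)) 0]
      rw [hinv]
      have := (hfree 0).1
      linarith
    · have := (hfree 0).1; linarith
    · rw [hall (φ 0 / 2)]

end Stmt9Aux

/-- for an increasing homeomorphism `φ` of `ℝ` commuting with the unit
translation and satisfying `x < φ(x) < x + 1`, there is a strictly increasing
bi-infinite sequence `(aₙ)` tending to `±∞`, whose set of values is invariant under the
unit translation, with `aₙ₊₁ < φ(aₙ) ≤ aₙ₊₂` for every `n`. -/
theorem stmt9 (φ : ℝ ≃ₜ ℝ) (hmono : StrictMono ⇑φ)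
    (hper : ∀ x : ℝ, φ (x + 1) = φ x + 1)
    (hfree : ∀ x : ℝ, x < φ x ∧ φ x < x + 1) :
    ∃ a : ℤ → ℝ, StrictMono a ∧
      Filter.Tendsto a Filter.atTop Filter.atTop ∧
      Filter.Tendsto a Filter.atBot Filter.atBot ∧
      (∀ n : ℤ, a n + 1 ∈ Set.range a ∧ a n - 1 ∈ Set.range a) ∧
      (∀ n : ℤ, a (n + 1) < φ (a n) ∧ φ (a n) ≤ a (n + 2)) := by
  obtain ⟨n', p, a0, h1, h2, h3, h4⟩ := Stmt9Aux.exists_data φ hmono hper hfree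
  exact Stmt9Aux.build φ p a0 hmono hper n' h1 h2 h3 h4
end
end

section
/- Let h: A → A be a homeomorphism isotopic to the identity and let H: Ã → Ã be a lift of h. Suppose there exist an arc α̃ crossing Ã and a connected component W of Ã ∖ α̃ such that H(W) ⊆ W. Then either for every point z̃ ∈ Ã the sequence (p₁(Hⁿ(z̃)))_{n≥0} is bounded above, or for every point z̃ ∈ Ã the sequence (p₁(Hⁿ(z̃)))_{n≥0} is bounded below. -/
noncomputable section

open Set MeasureTheory Topology Filter

attribute [local instance] MeasureTheory.Measure.Subtype.measureSpace

/-- The interval `[-1,1]`. -/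
abbrev II : Set ℝ := Set.Icc (-1 : ℝ) 1

/-- The compact annulus `A = S¹ × [-1,1]`. -/
abbrev Ann : Type := AddCircle (1 : ℝ) × II

/-- The strip `Ã = ℝ × [-1,1]`, universal cover of the annulus. -/
abbrev Strip : Type := ℝ × II

/-- The covering map `Π : Ã → A`. -/
def pr : Strip → Ann := fun z => ((z.1 : AddCircle (1 : ℝ)), z.2)

/-- First coordinate projection `p₁ : Ã → ℝ`. -/
def p1 : Strip → ℝ := fun z => z.1

/-- The deck transformation `τ(θ,r) = (θ+1,r)`. -/
def tauS : Strip → Strip := fun z => (z.1 + 1, z.2)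

/-- The inclusion of the strip into the plane. -/
def iota : Strip → ℝ × ℝ := fun z => (z.1, (z.2 : ℝ))

def lo : II := ⟨-1, by norm_num⟩
def hi : II := ⟨1, by norm_num⟩

/-- The lower boundary circle `Bd⁻(A) = S¹ × {-1}`. -/
def bdMinusA : Set Ann := {z | z.2 = lo}
/-- The upper boundary circle `Bd⁺(A) = S¹ × {1}`. -/
def bdPlusA : Set Ann := {z | z.2 = hi}
/-- The boundary of the annulus. -/
def bdA : Set Ann := bdMinusA ∪ bdPlusA

/-- The lower boundary line of the strip. -/
def bdMinusS : Set Strip := {z | z.2 = lo}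
/-- The upper boundary line of the strip. -/
def bdPlusS : Set Strip := {z | z.2 = hi}
/-- The boundary of the strip. -/
def bdS : Set Strip := bdMinusS ∪ bdPlusS

/-- `H : Ã → Ã` is a lift of `h : A → A` when `Π ∘ H = h ∘ Π`. -/
def IsLift (H : Strip ≃ₜ Strip) (h : Ann ≃ₜ Ann) : Prop := ∀ z, pr (H z) = h (pr z)

/-- The fixed point set of a map. -/
def fixedSet {X : Type*} (f : X → X) : Set X := {x | f x = x}

/-- A self-homeomorphism is isotopic to the identity if it can be joined to the identity
through homeomorphisms. -/
def IsotopicToId {X : Type*} [TopologicalSpace X] (h : X ≃ₜ X) : Prop :=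
  ∃ F : C(unitInterval × X, X),
    (∀ t : unitInterval, ∃ g : X ≃ₜ X, ∀ x, F (t, x) = g x) ∧
    (∀ x, F (0, x) = x) ∧ (∀ x, F (1, x) = h x)

/-- A Jordan curve: a homeomorphic image of the circle. -/
def IsJordanCurve {X : Type*} [TopologicalSpace X] (J : Set X) : Prop :=
  ∃ e : C(AddCircle (1 : ℝ), X), Topology.IsEmbedding e ∧ Set.range e = J

/-- An essential Jordan curve of the annulus: a Jordan curve which is not
null-homotopic in `A`. -/
def IsEssentialCurve (J : Set Ann) : Prop :=
  ∃ e : C(AddCircle (1 : ℝ), Ann), Topology.IsEmbedding e ∧ Set.range e = J ∧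
    ∀ a : Ann, ¬ e.Homotopic (ContinuousMap.const _ a)

/-- An arc crossing the annulus `A`: a homeomorphic image of `[0,1]` joining the two
boundary circles and meeting the boundary only at its endpoints. -/
def IsCrossingArc (α : Set Ann) : Prop :=
  ∃ e : C(unitInterval, Ann), Topology.IsEmbedding e ∧ Set.range e = α ∧
    e 0 ∈ bdMinusA ∧ e 1 ∈ bdPlusA ∧ α ∩ bdA = {e 0, e 1}

/-- An arc crossing the strip `Ã`. -/
def IsCrossingArcS (α : Set Strip) : Prop :=
  ∃ e : C(unitInterval, Strip), Topology.IsEmbedding e ∧ Set.range e = α ∧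
    ((e 0 ∈ bdMinusS ∧ e 1 ∈ bdPlusS) ∨ (e 0 ∈ bdPlusS ∧ e 1 ∈ bdMinusS)) ∧
    α ∩ bdS = {e 0, e 1}

/-- The model rectangle `[0,1] × [-1,1]`. -/
abbrev Rect : Type := unitInterval × II

/-- `h(α)` does not meet the two local sides of the crossing arc `α`: in a suitable
chart around `α` sending `α` to the middle vertical segment, `h(α)` stays on one side. -/
def AvoidsLocalSides (h : Ann ≃ₜ Ann) (α : Set Ann) : Prop :=
  ∃ N : Set Ann, α ⊆ interior N ∧ ∃ φ : N ≃ₜ Rect,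
    ((fun x : N => φ x) '' {x : N | (x : Ann) ∈ α} = {q : Rect | (q.1 : ℝ) = 1/2}) ∧
    (((fun x : N => φ x) '' {x : N | (x : Ann) ∈ h '' α} ⊆ {q : Rect | 1/2 ≤ (q.1 : ℝ)}) ∨
     ((fun x : N => φ x) '' {x : N | (x : Ann) ∈ h '' α} ⊆ {q : Rect | (q.1 : ℝ) ≤ 1/2}))

/-- A subannulus of `A`: a subset homeomorphic to `A`. -/
def IsSubannulus (B : Set Ann) : Prop := Nonempty (B ≃ₜ Ann)

/-- An essential subannulus: a subannulus containing an essential Jordan curve of `A`. -/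
def IsEssentialSubannulus (B : Set Ann) : Prop :=
  IsSubannulus B ∧ ∃ J ⊆ B, IsEssentialCurve J


open Set Real



lemma exists_branch_core {θ : ℝ} (h : 0 ≤ Real.sin θ) :
    ∃ k : ℤ, θ ∈ Icc (2*π*k) (2*π*k + π) := by
  have h2π : 0 < 2*π := by positivity
  set k : ℤ := ⌊θ / (2*π)⌋ with hk
  have h1 : (k : ℝ) ≤ θ / (2*π) := Int.floor_le _
  have h2 : θ / (2*π) < k + 1 := Int.lt_floor_add_one _
  have hl : 2*π*k ≤ θ := by
    have := mul_le_mul_of_nonneg_left h1 (le_of_lt h2π)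
    calc 2*π*(k:ℝ) ≤ 2*π*(θ/(2*π)) := by nlinarith
    _ = θ := by field_simp
  have hr : θ < 2*π*k + 2*π := by
    have h3 := (mul_lt_mul_iff_right₀ h2π).mpr h2
    have h4 : 2*π*(θ/(2*π)) = θ := by field_simp
    rw [h4] at h3; nlinarith
  set θ' : ℝ := θ - 2*π*k with hθ'
  have hs : Real.sin θ' = Real.sin θ := by
    have := Real.sin_add_int_mul_two_pi θ' k
    rw [show θ' + (k:ℝ)*(2*π) = θ by ring] at this
    linarith [this]
  refine ⟨k, hl, ?_⟩
  by_contra hcon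
  push_neg at hcon
  have hπθ : π < θ' := by simp only [hθ']; linarith
  have hθ2 : θ' < 2*π := by simp only [hθ']; linarith
  have : 0 < Real.sin (θ' - π) := Real.sin_pos_of_pos_of_lt_pi (by linarith) (by linarith)
  have hneg : Real.sin θ' < 0 := by
    have := Real.sin_add_pi (θ' - π)
    rw [show θ' - π + π = θ' by ring] at this
    linarith
  rw [hs] at hneg; linarith

lemma exists_branch {a θ : ℝ} (h : 0 ≤ Real.sin (θ - a)) :
    ∃ k : ℤ, θ ∈ Icc (2*π*k + a) (2*π*k + a + π) := by
  obtain ⟨k, h1, h2⟩ := exists_branch_core h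
  exact ⟨k, by constructor <;> linarith⟩

lemma branch_const {a : ℝ} {u : ℝ → ℝ} (hu : ContinuousOn u (Icc 0 1))
    (h : ∀ x ∈ Icc (0:ℝ) 1, ∃ k : ℤ, u x ∈ Icc (2*π*k + a) (2*π*k + a + π)) :
    ∃ k : ℤ, ∀ x ∈ Icc (0:ℝ) 1, u x ∈ Icc (2*π*k + a) (2*π*k + a + π) := by
  have hπ := Real.pi_pos
  obtain ⟨k₀, hk₀⟩ := h 0 ⟨le_refl _, zero_le_one⟩
  refine ⟨k₀, fun x hx => ?_⟩
  obtain ⟨k₁, hk₁⟩ := h x hx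
  rcases eq_or_ne k₁ k₀ with rfl | hne
  · exact hk₁
  exfalso
  set K : ℤ := min k₀ k₁ with hK
  set v : ℝ := 2*π*K + a + (3/2)*π with hv
  have hmem : v ∈ uIcc (u 0) (u x) := by
    rcases lt_or_gt_of_ne hne with hlt | hgt
    · -- k₁ < k₀ : K = k₁, u x ≤ ... < v < ... ≤ u 0
      have hKe : K = k₁ := min_eq_right hlt.le
      have hd : (k₁ : ℝ) + 1 ≤ k₀ := by exact_mod_cast Int.add_one_le_iff.mpr hlt
      rw [uIcc_comm]
      apply mem_uIcc_of_le <;> simp only [hv, hKe] <;> nlinarith [hk₁.1, hk₁.2, hk₀.1, hk₀.2]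
    · have hKe : K = k₀ := min_eq_left hgt.le
      have hd : (k₀ : ℝ) + 1 ≤ k₁ := by exact_mod_cast Int.add_one_le_iff.mpr hgt
      apply mem_uIcc_of_le <;> simp only [hv, hKe] <;> nlinarith [hk₁.1, hk₁.2, hk₀.1, hk₀.2]
  have hsub : uIcc (0:ℝ) x ⊆ Icc 0 1 := by
    rw [uIcc_of_le hx.1]; exact Icc_subset_Icc (le_refl _) hx.2
  obtain ⟨y, hy, hyv⟩ := intermediate_value_uIcc (hu.mono hsub) hmem
  obtain ⟨k₂, hk₂⟩ := h y (hsub hy)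
  rw [hyv] at hk₂
  have h1 : (k₂ : ℝ) - K ≤ 3/4 := by simp only [hv] at hk₂; nlinarith [hk₂.1]
  have h2 : (1:ℝ)/4 ≤ (k₂ : ℝ) - K := by simp only [hv] at hk₂; nlinarith [hk₂.2]
  have e1 : k₂ ≤ K := by exact_mod_cast Int.lt_add_one_iff.mp (by exact_mod_cast show (k₂:ℝ) < K + 1 by linarith)
  have e2 : K < k₂ := by
    have : (K:ℝ) < k₂ := by linarith
    exact_mod_cast this
  omega

lemma branch_inter {a : ℝ} {k m : ℤ} {θ : ℝ}
    (h1 : θ ∈ Icc (2*π*k + a) (2*π*k + a + π))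
    (h2 : θ ∈ Icc (2*π*m + (a - π/2)) (2*π*m + (a - π/2) + π)) : k = m := by
  have hπ := Real.pi_pos
  have h2π : (0:ℝ) < 2*π := by positivity
  have e1 : (m:ℝ) - k ≤ 3/4 := by
    have key : 2*π*((m:ℝ) - k) ≤ 2*π*(3/4) := by nlinarith [h1.2, h2.1]
    exact (mul_le_mul_iff_right₀ h2π).mp key
  have e2 : (k:ℝ) - m ≤ 1/4 := by
    have key : 2*π*((k:ℝ) - m) ≤ 2*π*(1/4) := by nlinarith [h1.1, h2.2]
    exact (mul_le_mul_iff_right₀ h2π).mp key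
  have f1 : m ≤ k := by exact_mod_cast Int.lt_add_one_iff.mp (by exact_mod_cast show (m:ℝ) < k + 1 by linarith)
  have f2 : k ≤ m := by exact_mod_cast Int.lt_add_one_iff.mp (by exact_mod_cast show (k:ℝ) < m + 1 by linarith)
  omega

noncomputable section

lemma prod_div_telescope {φ : ℕ → ℂ} (h : ∀ j, φ j ≠ 0) (n : ℕ) :
    ∏ j ∈ Finset.range n, (φ (j+1) / φ j) = φ n / φ 0 := by
  induction n with
  | zero => simp [div_self (h 0)]
  | succ n ih =>
    rw [Finset.prod_range_succ, ih, div_mul_div_comm, mul_comm (φ 0) (φ n),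
      mul_comm (φ n) (φ (n+1)), mul_comm (φ n) (φ 0)]
    rw [show φ (n+1) * φ n / (φ 0 * φ n) = φ n * φ (n+1) / (φ n * φ 0) by ring]
    exact mul_div_mul_left _ _ (h n)

lemma exists_log_square (F : ℝ × ℝ → ℂ)
    (hF : ContinuousOn F (Icc 0 1 ×ˢ Icc 0 1))
    (h0 : ∀ p ∈ (Icc 0 1 ×ˢ Icc 0 1 : Set (ℝ × ℝ)), F p ≠ 0) :
    ∃ g : ℝ × ℝ → ℂ, ContinuousOn g (Icc 0 1 ×ˢ Icc 0 1) ∧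
      ∀ p ∈ (Icc 0 1 ×ˢ Icc 0 1 : Set (ℝ × ℝ)), Complex.exp (g p) = F p := by
  classical
  set K : Set (ℝ × ℝ) := Icc 0 1 ×ˢ Icc 0 1 with hKdef
  have hK : IsCompact K := isCompact_Icc.prod isCompact_Icc
  have h00 : ((0:ℝ), (0:ℝ)) ∈ K := by
    refine ⟨⟨le_refl _, zero_le_one⟩, ⟨le_refl _, zero_le_one⟩⟩
  obtain ⟨p₀, hp₀K, hmin⟩ := hK.exists_isMinOn ⟨_, h00⟩ hF.norm
  set m : ℝ := ‖F p₀‖ with hm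
  have hm0 : 0 < m := norm_pos_iff.mpr (h0 p₀ hp₀K)
  have hmle : ∀ p ∈ K, m ≤ ‖F p‖ := fun p hp => hmin hp
  have hUC := hK.uniformContinuousOn_of_continuous hF
  rw [Metric.uniformContinuousOn_iff] at hUC
  obtain ⟨δ, hδ, hδ'⟩ := hUC m hm0
  obtain ⟨n', hn'⟩ := exists_nat_one_div_lt hδ
  set N : ℕ := n' + 1 with hN
  have hNpos : (0:ℝ) < N := by positivity
  have hmesh : (1:ℝ)/N < δ := by
    have : ((n':ℝ) + 1) = (N:ℝ) := by push_cast [hN]; ring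
    rw [← this]; exact hn'
  set T : ℕ → ℝ → ℝ := fun j x => min x (j / N) with hT
  have hT0 : ∀ x ∈ Icc (0:ℝ) 1, T 0 x = 0 := by
    intro x hx
    simp only [hT, Nat.cast_zero, zero_div]
    exact min_eq_right hx.1
  have hTN : ∀ x ∈ Icc (0:ℝ) 1, T N x = x := by
    intro x hx
    have h1 : (N:ℝ)/N = 1 := div_self (ne_of_gt hNpos)
    simp only [hT, h1]
    exact min_eq_left hx.2
  have hTmem : ∀ (j : ℕ), ∀ x ∈ Icc (0:ℝ) 1, T j x ∈ Icc (0:ℝ) 1 := by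
    intro j x hx
    exact ⟨le_min hx.1 (by positivity), le_trans (min_le_left _ _) hx.2⟩
  have hTdiff : ∀ (j : ℕ), ∀ x : ℝ, |T (j+1) x - T j x| ≤ 1/N := by
    intro j x
    have hj : (j:ℝ)/N ≤ ((j:ℝ)+1)/N := by gcongr; linarith
    have hj' : ((j:ℕ):ℝ)/N ≤ (((j+1):ℕ):ℝ)/N := by exact_mod_cast hj
    have hmono : T j x ≤ T (j+1) x := min_le_min (le_refl _) hj'
    rw [abs_of_nonneg (by linarith)]
    rcases le_total x ((j:ℝ)/N) with hc | hc
    · have e1 : T j x = x := min_eq_left hc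
      have e2 : T (j+1) x = x := min_eq_left (le_trans hc hj')
      rw [e1, e2, sub_self]
      positivity
    · have e1 : T j x = (j:ℝ)/N := min_eq_right hc
      have e2 : T (j+1) x ≤ ((j:ℝ)+1)/N := by
        apply le_trans (min_le_right _ _)
        exact le_of_eq (by push_cast; ring)
      rw [e1]
      have : ((j:ℝ)+1)/N - (j:ℝ)/N = 1/N := by ring
      linarith
  -- the key ratio estimate
  have hratio : ∀ (p q : ℝ × ℝ), p ∈ K → q ∈ K → dist p q < δ →
      F p / F q ∈ Metric.ball (1:ℂ) 1 := by
    intro p q hp hq hd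
    have h1 : ‖F p - F q‖ < m := by
      have := hδ' p hp q hq hd
      rwa [dist_eq_norm] at this
    have h2 : F q ≠ 0 := h0 q hq
    rw [Metric.mem_ball, dist_eq_norm]
    have : F p / F q - 1 = (F p - F q) / F q := by field_simp
    rw [this, norm_div]
    have h3 : m ≤ ‖F q‖ := hmle q hq
    rw [div_lt_one (by linarith [norm_pos_iff.mpr h2] : (0:ℝ) < ‖F q‖)]
    linarith
  have hslit : ∀ z : ℂ, z ∈ Metric.ball (1:ℂ) 1 → z ∈ Complex.slitPlane := by
    intro z hz
    rw [Metric.mem_ball, dist_eq_norm] at hz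
    rw [Complex.mem_slitPlane_iff]
    left
    have := Complex.abs_re_le_norm (z - 1)
    rw [Complex.sub_re, Complex.one_re] at this
    have h2 : |z.re - 1| < 1 := lt_of_le_of_lt this hz
    have := abs_lt.mp h2
    linarith [this.1]
  -- pairs (s, T (j+1) t) and (s, T j t) are close
  have hpair : ∀ (j : ℕ), ∀ p ∈ K, dist ((p.1, T (j+1) p.2) : ℝ × ℝ) (p.1, T j p.2) < δ := by
    intro j p _
    rw [Prod.dist_eq]
    refine max_lt (by simpa using hδ) ?_
    rw [Real.dist_eq]
    exact lt_of_le_of_lt (hTdiff j p.2) hmesh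
  have hpairB : ∀ (i : ℕ), ∀ s ∈ Icc (0:ℝ) 1, dist ((T (i+1) s, (0:ℝ)) : ℝ × ℝ) (T i s, 0) < δ := by
    intro i s _
    rw [Prod.dist_eq]
    refine max_lt ?_ (by simpa using hδ)
    rw [Real.dist_eq]
    exact lt_of_le_of_lt (hTdiff i s) hmesh
  have hmemK : ∀ (j : ℕ), ∀ p ∈ K, ((p.1, T j p.2) : ℝ × ℝ) ∈ K := by
    intro j p hp; exact ⟨hp.1, hTmem j p.2 hp.2⟩
  have hmemKB : ∀ (i : ℕ), ∀ s ∈ Icc (0:ℝ) 1, ((T i s, (0:ℝ)) : ℝ × ℝ) ∈ K := by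
    intro i s hs; exact ⟨hTmem i s hs, ⟨le_refl _, zero_le_one⟩⟩
  -- define g
  set gB : ℝ → ℂ := fun s => Complex.log (F (0, 0)) +
      ∑ i ∈ Finset.range N, Complex.log (F (T (i+1) s, 0) / F (T i s, 0)) with hgB
  set g : ℝ × ℝ → ℂ := fun p => gB p.1 +
      ∑ j ∈ Finset.range N, Complex.log (F (p.1, T (j+1) p.2) / F (p.1, T j p.2)) with hg
  have hfstK : ∀ p : ℝ × ℝ, p ∈ K → p.1 ∈ Icc (0:ℝ) 1 := fun p hp => hp.1
  -- continuity
  have hgBcont : ContinuousOn (fun p : ℝ × ℝ => gB p.1) K := by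
    apply ContinuousOn.add continuousOn_const
    apply continuousOn_finset_sum
    intro i _
    have hu : Continuous (fun p : ℝ × ℝ => ((T i p.1, (0:ℝ)) : ℝ × ℝ)) := by
      apply Continuous.prodMk
      · exact (continuous_fst.min continuous_const)
      · exact continuous_const
    have hu' : Continuous (fun p : ℝ × ℝ => ((T (i+1) p.1, (0:ℝ)) : ℝ × ℝ)) := by
      apply Continuous.prodMk
      · exact (continuous_fst.min continuous_const)
      · exact continuous_const
    have hmap : MapsTo (fun p : ℝ × ℝ => ((T i p.1, (0:ℝ)) : ℝ × ℝ)) K K :=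
      fun p hp => hmemKB i p.1 hp.1
    have hmap' : MapsTo (fun p : ℝ × ℝ => ((T (i+1) p.1, (0:ℝ)) : ℝ × ℝ)) K K :=
      fun p hp => hmemKB (i+1) p.1 hp.1
    have hnum : ContinuousOn (fun p : ℝ × ℝ => F (T (i+1) p.1, 0)) K :=
      hF.comp hu'.continuousOn hmap'
    have hden : ContinuousOn (fun p : ℝ × ℝ => F (T i p.1, 0)) K :=
      hF.comp hu.continuousOn hmap
    refine ContinuousOn.clog (hnum.div hden ?_) ?_
    · intro p hp; exact h0 _ (hmemKB i p.1 hp.1)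
    · intro p hp
      apply hslit
      exact hratio _ _ (hmemKB (i+1) p.1 hp.1) (hmemKB i p.1 hp.1) (hpairB i p.1 hp.1)
  have hgcont : ContinuousOn g K := by
    apply hgBcont.add
    apply continuousOn_finset_sum
    intro j _
    have hu : Continuous (fun p : ℝ × ℝ => ((p.1, T j p.2) : ℝ × ℝ)) :=
      continuous_fst.prodMk (continuous_snd.min continuous_const)
    have hu' : Continuous (fun p : ℝ × ℝ => ((p.1, T (j+1) p.2) : ℝ × ℝ)) :=
      continuous_fst.prodMk (continuous_snd.min continuous_const)
    have hnum : ContinuousOn (fun p : ℝ × ℝ => F (p.1, T (j+1) p.2)) K :=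
      hF.comp hu'.continuousOn (fun p hp => hmemK (j+1) p hp)
    have hden : ContinuousOn (fun p : ℝ × ℝ => F (p.1, T j p.2)) K :=
      hF.comp hu.continuousOn (fun p hp => hmemK j p hp)
    refine ContinuousOn.clog (hnum.div hden ?_) ?_
    · intro p hp; exact h0 _ (hmemK j p hp)
    · intro p hp
      apply hslit
      exact hratio _ _ (hmemK (j+1) p hp) (hmemK j p hp) (hpair j p hp)
  refine ⟨g, hgcont, ?_⟩
  intro p hp
  have hexpB : Complex.exp (gB p.1) = F (p.1, 0) := by
    rw [hgB]
    simp only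
    rw [Complex.exp_add, Complex.exp_sum]
    have hterm : ∀ i ∈ Finset.range N,
        Complex.exp (Complex.log (F (T (i+1) p.1, 0) / F (T i p.1, 0)))
          = F (T (i+1) p.1, 0) / F (T i p.1, 0) := by
      intro i _
      apply Complex.exp_log
      exact div_ne_zero (h0 _ (hmemKB (i+1) p.1 hp.1)) (h0 _ (hmemKB i p.1 hp.1))
    rw [Finset.prod_congr rfl hterm]
    have htel := prod_div_telescope (φ := fun i => F (T i p.1, 0))
      (fun i => h0 _ (hmemKB i p.1 hp.1)) N
    rw [htel, Complex.exp_log (h0 _ h00)]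
    rw [hTN p.1 hp.1, hT0 p.1 hp.1]
    rw [mul_comm]
    exact div_mul_cancel₀ _ (h0 _ h00)
  rw [hg]
  simp only
  rw [Complex.exp_add, Complex.exp_sum, hexpB]
  have hterm : ∀ j ∈ Finset.range N,
      Complex.exp (Complex.log (F (p.1, T (j+1) p.2) / F (p.1, T j p.2)))
        = F (p.1, T (j+1) p.2) / F (p.1, T j p.2) := by
    intro j _
    apply Complex.exp_log
    exact div_ne_zero (h0 _ (hmemK (j+1) p hp)) (h0 _ (hmemK j p hp))
  rw [Finset.prod_congr rfl hterm]
  have htel := prod_div_telescope (φ := fun j => F (p.1, T j p.2))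
    (fun j => h0 _ (hmemK j p hp)) N
  rw [htel, hTN p.2 hp.2, hT0 p.2 hp.2]
  have hFs0 : F (p.1, 0) ≠ 0 := by
    apply h0; exact ⟨hp.1, ⟨le_refl _, zero_le_one⟩⟩
  have : F (p.1, p.2) = F p := by simp
  rw [← this]
  field_simp

open Complex in
lemma no_winding (F : ℝ × ℝ → ℂ)
    (hF : ContinuousOn F (Icc 0 1 ×ˢ Icc 0 1))
    (h0 : ∀ p ∈ (Icc 0 1 ×ˢ Icc 0 1 : Set (ℝ × ℝ)), F p ≠ 0)
    (hL : ∀ t ∈ Icc (0:ℝ) 1, (F (0, t)).re ≤ 0)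
    (hR : ∀ t ∈ Icc (0:ℝ) 1, 0 ≤ (F (1, t)).re)
    (hB : ∀ s ∈ Icc (0:ℝ) 1, 0 ≤ (F (s, 0)).im)
    (hT : ∀ s ∈ Icc (0:ℝ) 1, (F (s, 1)).im ≤ 0) : False := by
  obtain ⟨g, hg, hgF⟩ := exists_log_square F hF h0
  have h01 : (0:ℝ) ∈ Icc (0:ℝ) 1 := ⟨le_refl _, zero_le_one⟩
  have h11 : (1:ℝ) ∈ Icc (0:ℝ) 1 := ⟨zero_le_one, le_refl _⟩
  have hmemK : ∀ x ∈ Icc (0:ℝ) 1, ∀ y ∈ Icc (0:ℝ) 1, ((x,y) : ℝ × ℝ) ∈ Icc 0 1 ×ˢ Icc 0 1 :=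
    fun x hx y hy => ⟨hx, hy⟩
  -- sign of Im F ↔ sign of sin (Im g), etc.
  have hsin : ∀ p ∈ (Icc 0 1 ×ˢ Icc 0 1 : Set (ℝ×ℝ)), 0 ≤ (F p).im → 0 ≤ Real.sin ((g p).im) := by
    intro p hp hpos
    rw [← hgF p hp, Complex.exp_im] at hpos
    nlinarith [Real.exp_pos ((g p).re), Real.sin_le_one ((g p).im), Real.neg_one_le_sin ((g p).im)]
  have hsin' : ∀ p ∈ (Icc 0 1 ×ˢ Icc 0 1 : Set (ℝ×ℝ)), (F p).im ≤ 0 → Real.sin ((g p).im) ≤ 0 := by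
    intro p hp hneg
    rw [← hgF p hp, Complex.exp_im] at hneg
    nlinarith [Real.exp_pos ((g p).re)]
  have hcos : ∀ p ∈ (Icc 0 1 ×ˢ Icc 0 1 : Set (ℝ×ℝ)), 0 ≤ (F p).re → 0 ≤ Real.cos ((g p).im) := by
    intro p hp hpos
    rw [← hgF p hp, Complex.exp_re] at hpos
    nlinarith [Real.exp_pos ((g p).re)]
  have hcos' : ∀ p ∈ (Icc 0 1 ×ˢ Icc 0 1 : Set (ℝ×ℝ)), (F p).re ≤ 0 → Real.cos ((g p).im) ≤ 0 := by
    intro p hp hneg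
    rw [← hgF p hp, Complex.exp_re] at hneg
    nlinarith [Real.exp_pos ((g p).re)]
  -- edge branch constancy
  -- bottom edge: offset 0
  obtain ⟨k₁, hk₁⟩ : ∃ k : ℤ, ∀ x ∈ Icc (0:ℝ) 1,
      (g (x, 0)).im ∈ Icc (2*π*k + 0) (2*π*k + 0 + π) := by
    apply branch_const
    · exact Complex.continuous_im.comp_continuousOn
        (hg.comp (Continuous.continuousOn (continuous_id.prodMk continuous_const))
          (fun x hx => hmemK x hx 0 h01))
    · intro x hx
      apply exists_branch
      rw [sub_zero]
      exact hsin _ (hmemK x hx 0 h01) (hB x hx)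
  -- right edge: offset -π/2
  obtain ⟨k₂, hk₂⟩ : ∃ k : ℤ, ∀ x ∈ Icc (0:ℝ) 1,
      (g (1, x)).im ∈ Icc (2*π*k + (-(π/2))) (2*π*k + (-(π/2)) + π) := by
    apply branch_const
    · exact Complex.continuous_im.comp_continuousOn
        (hg.comp (Continuous.continuousOn (continuous_const.prodMk continuous_id))
          (fun x hx => hmemK 1 h11 x hx))
    · intro x hx
      apply exists_branch
      rw [show (g (1,x)).im - (-(π/2)) = (g (1,x)).im + π/2 by ring, Real.sin_add_pi_div_two]
      exact hcos _ (hmemK 1 h11 x hx) (hR x hx)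
  -- top edge: offset π
  obtain ⟨k₃, hk₃⟩ : ∃ k : ℤ, ∀ x ∈ Icc (0:ℝ) 1,
      (g (x, 1)).im ∈ Icc (2*π*k + π) (2*π*k + π + π) := by
    apply branch_const
    · exact Complex.continuous_im.comp_continuousOn
        (hg.comp (Continuous.continuousOn (continuous_id.prodMk continuous_const))
          (fun x hx => hmemK x hx 1 h11))
    · intro x hx
      apply exists_branch
      rw [Real.sin_sub, Real.sin_pi, Real.cos_pi]
      have := hsin' _ (hmemK x hx 1 h11) (hT x hx)
      nlinarith
  -- left edge: offset π/2
  obtain ⟨k₄, hk₄⟩ : ∃ k : ℤ, ∀ x ∈ Icc (0:ℝ) 1,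
      (g (0, x)).im ∈ Icc (2*π*k + π/2) (2*π*k + π/2 + π) := by
    apply branch_const
    · exact Complex.continuous_im.comp_continuousOn
        (hg.comp (Continuous.continuousOn (continuous_const.prodMk continuous_id))
          (fun x hx => hmemK 0 h01 x hx))
    · intro x hx
      apply exists_branch
      rw [Real.sin_sub, Real.sin_pi_div_two, Real.cos_pi_div_two]
      have := hcos' _ (hmemK 0 h01 x hx) (hL x hx)
      nlinarith
  -- corner (1,0): k₁ = k₂
  have e12 : k₁ = k₂ := by
    apply branch_inter (a := 0) (θ := (g (1, 0)).im)
    · exact hk₁ 1 h11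
    · have := hk₂ 0 h01
      constructor
      · calc 2*π*(k₂:ℝ) + (0 - π/2) = 2*π*k₂ + (-(π/2)) := by ring
        _ ≤ (g (1,0)).im := this.1
      · calc (g (1,0)).im ≤ 2*π*k₂ + (-(π/2)) + π := this.2
        _ = 2*π*(k₂:ℝ) + (0 - π/2) + π := by ring
  -- corner (1,1): k₂ = k₃ + 1
  have e23 : k₂ = k₃ + 1 := by
    apply branch_inter (a := -(π/2)) (θ := (g (1, 1)).im)
    · exact hk₂ 1 h11
    · have := hk₃ 1 h11
      have hc : ((k₃ + 1 : ℤ) : ℝ) = (k₃:ℝ) + 1 := by push_cast; ring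
      constructor
      · calc 2*π*((k₃+1:ℤ):ℝ) + (-(π/2) - π/2) = 2*π*(k₃:ℝ) + π := by rw [hc]; ring
        _ ≤ (g (1,1)).im := this.1
      · calc (g (1,1)).im ≤ 2*π*(k₃:ℝ) + π + π := this.2
        _ = 2*π*((k₃+1:ℤ):ℝ) + (-(π/2) - π/2) + π := by rw [hc]; ring
  -- corner (0,1): k₃ = k₄
  have e34 : k₃ = k₄ := by
    apply branch_inter (a := π) (θ := (g (0, 1)).im)
    · exact hk₃ 0 h01
    · have := hk₄ 1 h11
      constructor
      · calc 2*π*(k₄:ℝ) + (π - π/2) = 2*π*k₄ + π/2 := by ring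
        _ ≤ (g (0,1)).im := this.1
      · calc (g (0,1)).im ≤ 2*π*k₄ + π/2 + π := this.2
        _ = 2*π*(k₄:ℝ) + (π - π/2) + π := by ring
  -- corner (0,0): k₄ = k₁
  have e41 : k₄ = k₁ := by
    apply branch_inter (a := π/2) (θ := (g (0, 0)).im)
    · exact hk₄ 0 h01
    · have := hk₁ 0 h01
      constructor
      · calc 2*π*(k₁:ℝ) + (π/2 - π/2) = 2*π*k₁ + 0 := by ring
        _ ≤ (g (0,0)).im := this.1
      · calc (g (0,0)).im ≤ 2*π*k₁ + 0 + π := this.2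
        _ = 2*π*(k₁:ℝ) + (π/2 - π/2) + π := by ring
  omega

/-- The crossing lemma: two "transversal" paths in the plane must intersect. -/
lemma crossing_lemma (f g : ℝ → ℂ)
    (hf : ContinuousOn f (Icc 0 1)) (hg : ContinuousOn g (Icc 0 1))
    (h1 : ∀ t ∈ Icc (0:ℝ) 1, (f 0).re ≤ (g t).re)
    (h2 : ∀ t ∈ Icc (0:ℝ) 1, (g t).re ≤ (f 1).re)
    (h3 : ∀ s ∈ Icc (0:ℝ) 1, (g 0).im ≤ (f s).im)
    (h4 : ∀ s ∈ Icc (0:ℝ) 1, (f s).im ≤ (g 1).im) :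
    ∃ s ∈ Icc (0:ℝ) 1, ∃ t ∈ Icc (0:ℝ) 1, f s = g t := by
  by_contra hcon
  push_neg at hcon
  set F : ℝ × ℝ → ℂ := fun p => f p.1 - g p.2 with hF
  have h01 : (0:ℝ) ∈ Icc (0:ℝ) 1 := ⟨le_refl _, zero_le_one⟩
  have h11 : (1:ℝ) ∈ Icc (0:ℝ) 1 := ⟨zero_le_one, le_refl _⟩
  apply no_winding F
  · exact ((hf.comp continuous_fst.continuousOn (fun p hp => hp.1)).sub
      (hg.comp continuous_snd.continuousOn (fun p hp => hp.2)))
  · intro p hp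
    exact sub_ne_zero.mpr (hcon p.1 hp.1 p.2 hp.2)
  · intro t ht
    simp only [hF, Complex.sub_re]
    linarith [h1 t ht]
  · intro t ht
    simp only [hF, Complex.sub_re]
    linarith [h2 t ht]
  · intro s hs
    simp only [hF, Complex.sub_im]
    linarith [h3 s hs]
  · intro s hs
    simp only [hF, Complex.sub_im]
    linarith [h4 s hs]

/-- Retraction of the plane onto an embedded arc. -/
lemma arc_retract (P : C(unitInterval, ℂ)) (hinj : Function.Injective P) :
    ∃ r : ℂ → ℂ, Continuous r ∧ (∀ x, r x ∈ Set.range P) ∧ (∀ x ∈ Set.range P, r x = x) := by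
  have hemb : Topology.IsClosedEmbedding P := P.continuous.isClosedEmbedding hinj
  let e : unitInterval ≃ₜ Set.range P := hemb.toIsEmbedding.toHomeomorph
  have hcl : IsClosed (Set.range P) := hemb.isClosed_range
  let φ : C(Set.range P, ℝ) := ⟨fun y => ((e.symm y : unitInterval) : ℝ),
    continuous_subtype_val.comp e.symm.continuous⟩
  obtain ⟨Φ, hΦ⟩ := ContinuousMap.exists_restrict_eq hcl φ
  refine ⟨fun x => P (Set.projIcc 0 1 zero_le_one (Φ x)), ?_, ?_, ?_⟩
  · exact P.continuous.comp (continuous_projIcc.comp Φ.continuous)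
  · intro x; exact ⟨_, rfl⟩
  · rintro x hx
    have h1 : Φ x = φ ⟨x, hx⟩ := by
      have := congrFun (congrArg (fun (ψ : C(Set.range P, ℝ)) => (ψ : Set.range P → ℝ)) hΦ) ⟨x, hx⟩
      simpa using this
    show P (Set.projIcc 0 1 zero_le_one (Φ x)) = x
    rw [h1]
    have h2 : Set.projIcc (0:ℝ) 1 zero_le_one ((e.symm ⟨x, hx⟩ : unitInterval) : ℝ)
        = e.symm ⟨x, hx⟩ := by
      apply Set.projIcc_val
    show P (Set.projIcc 0 1 zero_le_one (φ ⟨x, hx⟩)) = x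
    have : (φ ⟨x, hx⟩ : ℝ) = ((e.symm ⟨x, hx⟩ : unitInterval) : ℝ) := rfl
    rw [this, h2]
    have h3 : P (e.symm ⟨x, hx⟩) = ((e (e.symm ⟨x, hx⟩)) : ℂ) := rfl
    rw [h3, e.apply_symm_apply]

/-- A bounded open set whose frontier retracts is impossible: core non-separation result. -/
lemma no_bounded_component (C : Set ℂ)
    (r : ℂ → ℂ) (hr : Continuous r) (hrange : ∀ x, r x ∈ C) (hfix : ∀ x ∈ C, r x = x)
    (W : Set ℂ) (hWo : IsOpen W) (hWb : Bornology.IsBounded W)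
    (hWC : ∀ x ∈ W, x ∉ C) (hfr : closure W \ W ⊆ C)
    (z₀ : ℂ) (hz₀ : z₀ ∈ W) : False := by
  classical
  obtain ⟨ρ, hρ⟩ := hWb.subset_closedBall 0
  set R : ℝ := ρ + 1 with hR
  have hρ0 : 0 ≤ ρ := by
    have := hρ hz₀
    simp only [Metric.mem_closedBall] at this
    exact le_trans dist_nonneg this
  have hcoord : ∀ w ∈ closure W, |w.re| ≤ ρ ∧ |w.im| ≤ ρ := by
    intro w hw
    have hwball : w ∈ Metric.closedBall (0:ℂ) ρ :=
      (Metric.isClosed_closedBall.closure_subset_iff.mpr hρ) hw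
    simp only [Metric.mem_closedBall, Complex.dist_eq, sub_zero] at hwball
    constructor
    · exact le_trans (Complex.abs_re_le_norm w) hwball
    · exact le_trans (Complex.abs_im_le_norm w) hwball
  -- the pushed map
  set q : ℂ → ℂ := fun x => if x ∈ closure W then r x else x with hq
  have hqcont : Continuous q := by
    apply Continuous.if ?_ hr continuous_id
    intro a ha
    have ha' : a ∈ frontier (closure W) := by
      rwa [frontier] at ha
      
    have haW : a ∈ closure W \ W := by
      rcases ha' with ⟨h1, h2⟩
      refine ⟨by rwa [closure_closure] at h1, ?_⟩
      intro haw
      exact h2 (interior_maximal subset_closure hWo haw)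
    exact hfix a (hfr haW)
  have hqne : ∀ x, q x ≠ z₀ := by
    intro x
    by_cases hx : x ∈ closure W
    · simp only [hq, if_pos hx]
      intro hcontra
      exact hWC z₀ hz₀ (hcontra ▸ hrange x)
    · simp only [hq, if_neg hx]
      intro hcontra
      exact hx (hcontra ▸ subset_closure hz₀)
  -- parametrize the big square
  set P : ℝ → ℝ → ℂ := fun s t => Complex.I * (R - 2*R*t) + (-R + 2*R*s) with hP
  have hPre : ∀ s t : ℝ, (P s t).re = -R + 2*R*s := by
    intro s t
    simp [hP, Complex.add_re, Complex.mul_re, Complex.I_re, Complex.I_im]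
  have hPim : ∀ s t : ℝ, (P s t).im = R - 2*R*t := by
    intro s t
    simp [hP, Complex.add_im, Complex.mul_im, Complex.I_re, Complex.I_im]
  have hRρ : ρ < R := by rw [hR]; linarith
  have hedge : ∀ s t : ℝ, (s = 0 ∨ s = 1 ∨ t = 0 ∨ t = 1) → s ∈ Icc (0:ℝ) 1 → t ∈ Icc (0:ℝ) 1 →
      P s t ∉ closure W := by
    intro s t hcase hs ht hmem
    obtain ⟨hre, him⟩ := hcoord _ hmem
    rw [hPre] at hre
    rw [hPim] at him
    rcases hcase with rfl | rfl | rfl | rfl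
    · rw [abs_le] at hre; simp at hre; linarith [hre.1]
    · rw [abs_le] at hre; simp at hre; linarith [hre.2]
    · rw [abs_le] at him; simp at him; linarith [him.2]
    · rw [abs_le] at him; simp at him; linarith [him.1]
  set F : ℝ × ℝ → ℂ := fun p => q (P p.1 p.2) - z₀ with hF
  obtain ⟨hzre, hzim⟩ := hcoord z₀ (subset_closure hz₀)
  rw [abs_le] at hzre hzim
  have hPcont : Continuous (fun p : ℝ × ℝ => P p.1 p.2) := by
    simp only [hP]
    exact (continuous_const.mul (continuous_const.sub (continuous_const.mul
      (Complex.continuous_ofReal.comp continuous_snd)))).add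
      (continuous_const.add (continuous_const.mul
        (Complex.continuous_ofReal.comp continuous_fst)))
  apply no_winding F
  · exact ((hqcont.comp hPcont).sub continuous_const).continuousOn
  · intro p _
    exact sub_ne_zero.mpr (hqne _)
  · intro t ht
    have h01 : (0:ℝ) ∈ Icc (0:ℝ) 1 := ⟨le_refl _, zero_le_one⟩
    have hid : q (P 0 t) = P 0 t := if_neg (hedge 0 t (Or.inl rfl) h01 ht)
    simp only [hF, Complex.sub_re, hid, hPre]
    have := hzre.1
    nlinarith [hRρ, hρ0]
  · intro t ht
    have h11 : (1:ℝ) ∈ Icc (0:ℝ) 1 := ⟨zero_le_one, le_refl _⟩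
    have hid : q (P 1 t) = P 1 t := if_neg (hedge 1 t (Or.inr (Or.inl rfl)) h11 ht)
    simp only [hF, Complex.sub_re, hid, hPre]
    have := hzre.2
    nlinarith [hRρ, hρ0]
  · intro s hs
    have h01 : (0:ℝ) ∈ Icc (0:ℝ) 1 := ⟨le_refl _, zero_le_one⟩
    have hid : q (P s 0) = P s 0 := if_neg (hedge s 0 (Or.inr (Or.inr (Or.inl rfl))) hs h01)
    simp only [hF, Complex.sub_im, hid, hPim]
    have := hzim.2
    nlinarith [hRρ, hρ0]
  · intro s hs
    have h11 : (1:ℝ) ∈ Icc (0:ℝ) 1 := ⟨zero_le_one, le_refl _⟩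
    have hid : q (P s 1) = P s 1 := if_neg (hedge s 1 (Or.inr (Or.inr (Or.inr rfl))) hs h11)
    simp only [hF, Complex.sub_im, hid, hPim]
    have := hzim.1
    nlinarith [hRρ, hρ0]

section Glue
open Topology

/-- Inclusion of the strip into `ℂ`. -/
def iotaC (z : Strip) : ℂ := Complex.mk z.1 z.2.1

lemma iotaC_re (z : Strip) : (iotaC z).re = z.1 := rfl
lemma iotaC_im (z : Strip) : (iotaC z).im = z.2.1 := rfl

lemma iotaC_inj : Function.Injective iotaC := by
  intro a b hab
  have h1 : (iotaC a).re = (iotaC b).re := by rw [hab]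
  have h2 : (iotaC a).im = (iotaC b).im := by rw [hab]
  rw [iotaC_re, iotaC_re] at h1
  rw [iotaC_im, iotaC_im] at h2
  exact Prod.ext h1 (Subtype.ext h2)

/-- `ℝ × ℝ` is homeomorphic to `ℂ`. -/
def JRP : ℝ × ℝ ≃ₜ ℂ where
  toEquiv := Complex.equivRealProd.symm
  continuous_toFun := by
    show Continuous fun p : ℝ × ℝ => Complex.equivRealProd.symm p
    have : (fun p : ℝ × ℝ => Complex.equivRealProd.symm p)
        = fun p => (p.1 : ℂ) + (p.2:ℂ)*Complex.I := by
      funext p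
      rw [show Complex.equivRealProd.symm p = Complex.mk p.1 p.2 from rfl,
        Complex.mk_eq_add_mul_I]
    rw [this]
    exact (Complex.continuous_ofReal.comp continuous_fst).add
      ((Complex.continuous_ofReal.comp continuous_snd).mul continuous_const)
  continuous_invFun := Complex.continuous_re.prodMk Complex.continuous_im

lemma iotaC_eq : iotaC = JRP ∘ (Prod.map id (Subtype.val : II → ℝ)) := rfl

lemma iotaC_cont : Continuous iotaC := by
  rw [iotaC_eq]
  exact JRP.continuous.comp (continuous_id.prodMap continuous_subtype_val)

lemma iotaC_range : Set.range iotaC = Complex.im ⁻¹' (Set.Icc (-1:ℝ) 1) := by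
  ext z
  constructor
  · rintro ⟨w, rfl⟩
    exact w.2.2
  · intro hz
    exact ⟨(z.re, ⟨z.im, hz⟩), Complex.ext rfl rfl⟩

lemma iotaC_isClosedEmbedding : Topology.IsClosedEmbedding iotaC := by
  constructor
  · rw [iotaC_eq]
    exact JRP.isEmbedding.comp (Topology.IsEmbedding.id.prodMap Topology.IsEmbedding.subtypeVal)
  · rw [iotaC_range]
    exact isClosed_Icc.preimage Complex.continuous_im

/-- `II` is preconnected. -/
instance : PreconnectedSpace II := Subtype.preconnectedSpace isPreconnected_Icc

lemma preconnected_II_sets {J : Set ℝ} (hJ : Set.OrdConnected J) :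
    IsPreconnected ((Subtype.val : II → ℝ) ⁻¹' J) := by
  apply Topology.IsInducing.subtypeVal.isPreconnected_image.mp
  have : (Subtype.val : II → ℝ) '' (Subtype.val ⁻¹' J) = Set.Icc (-1:ℝ) 1 ∩ J := by
    rw [Subtype.image_preimage_coe]
  rw [this]
  exact (Set.ordConnected_Icc.inter hJ).isPreconnected

lemma strip_ball_preconnected (x : Strip) (ε : ℝ) : IsPreconnected (Metric.ball x ε) := by
  have hprod : Metric.ball x ε = Metric.ball x.1 ε ×ˢ Metric.ball x.2 ε := by
    rw [← ball_prod_same]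
  rw [hprod]
  apply IsPreconnected.prod
  · rw [Real.ball_eq_Ioo]; exact isPreconnected_Ioo
  · have : Metric.ball x.2 ε = (Subtype.val : II → ℝ) ⁻¹' (Metric.ball (x.2 : ℝ) ε) := by
      ext y
      simp only [Metric.mem_ball, Set.mem_preimage, Subtype.dist_eq]
    rw [this]
    apply preconnected_II_sets
    rw [Real.ball_eq_Ioo]
    exact Set.ordConnected_Ioo

/-- Absorption: a point of the complement of a closed set lying in the closure of a
connected component of the complement belongs to the component, with a ball around it. -/
lemma component_absorb {A : Set Strip} (hA : IsClosed A) {x₀ : Strip} (hx₀ : x₀ ∈ Aᶜ)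
    {x : Strip} (hx : x ∈ Aᶜ) (hcl : x ∈ closure (connectedComponentIn Aᶜ x₀)) :
    x ∈ connectedComponentIn Aᶜ x₀ ∧
      ∃ ε > 0, Metric.ball x ε ⊆ connectedComponentIn Aᶜ x₀ := by
  set W := connectedComponentIn Aᶜ x₀ with hWdef
  obtain ⟨ε, hε, hball⟩ := Metric.isOpen_iff.mp hA.isOpen_compl x hx
  obtain ⟨y, hyW, hyd⟩ := Metric.mem_closure_iff.mp hcl ε hε
  have hyb : y ∈ Metric.ball x ε := by
    rw [Metric.mem_ball, dist_comm]; exact hyd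
  have hunion : IsPreconnected (Metric.ball x ε ∪ W) :=
    IsPreconnected.union y hyb hyW (strip_ball_preconnected x ε)
      isPreconnected_connectedComponentIn
  have hsub : Metric.ball x ε ∪ W ⊆ Aᶜ :=
    Set.union_subset hball (connectedComponentIn_subset _ _)
  have hx₀mem : x₀ ∈ Metric.ball x ε ∪ W :=
    Or.inr (mem_connectedComponentIn hx₀)
  have := IsPreconnected.subset_connectedComponentIn hunion hx₀mem hsub
  rw [← hWdef] at this
  have hbW : Metric.ball x ε ⊆ W := fun z hz => this (Or.inl hz)
  exact ⟨hbW (Metric.mem_ball_self hε), ε, hε, hbW⟩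

/-- Integer-valued continuous functions on preconnected spaces are constant. -/
lemma int_valued_const {X : Type*} [TopologicalSpace X] [PreconnectedSpace X]
    {f : X → ℝ} (hf : Continuous f) (hi : ∀ x, ∃ m : ℤ, f x = m) (x y : X) : f x = f y := by
  by_contra hne
  wlog hlt : f x < f y generalizing x y
  · exact this y x (Ne.symm hne) (by rcases lt_or_gt_of_ne hne with h | h; exact absurd h hlt; exact h)
  obtain ⟨mx, hmx⟩ := hi x
  obtain ⟨my, hmy⟩ := hi y
  have hmxy : mx < my := by
    have : (mx:ℝ) < my := by rw [← hmx, ← hmy]; exact hlt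
    exact_mod_cast this
  have hv : (mx:ℝ) + 1/2 ∈ Set.Icc (f x) (f y) := by
    constructor
    · rw [hmx]; linarith
    · rw [hmy]
      have : (mx:ℝ) + 1 ≤ my := by exact_mod_cast hmxy
      linarith
  obtain ⟨z, hz⟩ := intermediate_value_univ x y hf hv
  obtain ⟨mz, hmz⟩ := hi z
  rw [hmz] at hz
  have : (2*(mx - mz) : ℤ) = (-1 : ℤ) := by
    have h2 : (2*((mx:ℝ) - mz)) = -1 := by linarith
    exact_mod_cast h2
  omega

/-- Integer translations of the strip. -/
def transZ (m : ℤ) (z : Strip) : Strip := (z.1 + m, z.2)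

lemma transZ_add (m n : ℤ) (z : Strip) : transZ m (transZ n z) = transZ (m + n) z := by
  simp only [transZ]
  rw [Prod.mk.injEq]
  constructor
  · push_cast; ring
  · rfl

lemma transZ_zero (z : Strip) : transZ 0 z = z := by
  simp [transZ]

lemma tauS_eq_transZ (z : Strip) : tauS z = transZ 1 z := by
  simp [tauS, transZ]

lemma p1_transZ (m : ℤ) (z : Strip) : p1 (transZ m z) = p1 z + m := rfl

end Glue

section Deck

lemma pr_tauS (z : Strip) : pr (tauS z) = pr z := by
  simp only [pr, tauS]
  congr 1
  exact AddCircle.coe_add_period 1 z.1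

/-- A self-homeomorphism whose composition with `pr` is `pr`-periodic shifts by a
fixed integer. -/
lemma exists_deck_const (E : Strip ≃ₜ Strip) (hE : ∀ z : Strip, pr (E (tauS z)) = pr (E z)) :
    ∃ c : ℤ, ∀ z : Strip, E (tauS z) = transZ c (E z) := by
  have hsnd : ∀ z : Strip, (E (tauS z)).2 = (E z).2 := by
    intro z
    have := hE z
    exact (Prod.ext_iff.mp this).2
  have hint : ∀ z : Strip, ∃ m : ℤ, p1 (E (tauS z)) - p1 (E z) = m := by
    intro z
    have := hE z
    have h1 : ((p1 (E (tauS z)) : ℝ) : AddCircle (1:ℝ)) = ((p1 (E z) : ℝ) : AddCircle (1:ℝ)) :=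
      (Prod.ext_iff.mp this).1
    rw [QuotientAddGroup.eq_iff_sub_mem] at h1
    obtain ⟨m, hm⟩ := AddSubgroup.mem_zmultiples_iff.mp h1
    exact ⟨m, by rw [← hm, zsmul_eq_mul, mul_one]⟩
  have hcont : Continuous fun z : Strip => p1 (E (tauS z)) - p1 (E z) := by
    have htau : Continuous (tauS : Strip → Strip) :=
      (continuous_fst.add continuous_const).prodMk continuous_snd
    have hp1 : Continuous (p1 : Strip → ℝ) := continuous_fst
    exact ((hp1.comp (E.continuous.comp htau))).sub (hp1.comp E.continuous)
  have hconst := int_valued_const hcont hint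
  obtain ⟨c, hc⟩ := hint ((0:ℝ), ⟨0, by norm_num⟩)
  refine ⟨c, fun z => ?_⟩
  have h1 : p1 (E (tauS z)) - p1 (E z) = c := by
    rw [hconst z ((0:ℝ), ⟨0, by norm_num⟩)]; exact hc
  apply Prod.ext
  · show p1 (E (tauS z)) = p1 (E z) + (c:ℝ)
    linarith
  · exact hsnd z

lemma deck_extend (E : Strip ≃ₜ Strip) (c : ℤ)
    (hc : ∀ z : Strip, E (tauS z) = transZ c (E z)) :
    ∀ m : ℤ, ∀ z : Strip, E (transZ m z) = transZ (m * c) (E z) := by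
  have hneg : ∀ z : Strip, E (transZ (-1) z) = transZ (-c) (E z) := by
    intro z
    have h1 : tauS (transZ (-1) z) = z := by
      rw [tauS_eq_transZ, transZ_add]
      norm_num
      exact transZ_zero z
    have h2 := hc (transZ (-1) z)
    rw [h1] at h2
    have := congrArg (transZ (-c)) h2
    rw [transZ_add] at this
    norm_num at this
    rw [this, transZ_zero]
  intro m
  induction m using Int.induction_on with
  | zero => intro z; rw [transZ_zero, zero_mul, transZ_zero]
  | succ n ih =>
    intro z
    have h1 : transZ ((n:ℤ)+1) z = tauS (transZ n z) := by
      rw [tauS_eq_transZ, transZ_add, add_comm]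
    rw [h1, hc, ih, transZ_add]
    congr 1
    ring
  | pred n ih =>
    intro z
    have h1 : transZ (-(n:ℤ)-1) z = transZ (-1) (transZ (-n) z) := by
      rw [transZ_add]
      congr 1
      ring
    rw [h1, hneg, ih, transZ_add]
    congr 1
    ring

/-- The deck lemma: a lift of an annulus homeomorphism commutes with the deck
transformation up to sign. -/
lemma deck_lemma (h : Ann ≃ₜ Ann) (H : Strip ≃ₜ Strip) (hH : IsLift H h) :
    ∃ c : ℤ, (c = 1 ∨ c = -1) ∧ (∀ z : Strip, H (tauS z) = transZ c (H z)) := by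
  have hHper : ∀ z : Strip, pr (H (tauS z)) = pr (H z) := by
    intro z
    rw [hH, hH, pr_tauS]
  obtain ⟨c, hc⟩ := exists_deck_const H hHper
  have hSper : ∀ z : Strip, pr (H.symm (tauS z)) = pr (H.symm z) := by
    intro z
    have key : ∀ w : Strip, pr (H.symm w) = h.symm (pr w) := by
      intro w
      have := hH (H.symm w)
      rw [H.apply_symm_apply] at this
      rw [this, Homeomorph.symm_apply_apply]
    rw [key, key, pr_tauS]
  obtain ⟨c', hc'⟩ := exists_deck_const H.symm hSper
  have hext := deck_extend H c hc
  have hext' := deck_extend H.symm c' hc'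
  have hcc' : c * c' = 1 := by
    have h1 : tauS ((0:ℝ), (⟨0, by norm_num⟩ : II)) =
        transZ (c * c') ((0:ℝ), (⟨0, by norm_num⟩ : II)) := by
      set z : Strip := ((0:ℝ), (⟨0, by norm_num⟩ : II))
      calc tauS z = H.symm (H (tauS z)) := by rw [Homeomorph.symm_apply_apply]
      _ = H.symm (transZ c (H z)) := by rw [hc]
      _ = transZ (c * c') (H.symm (H z)) := by rw [hext' c]
      _ = transZ (c * c') z := by rw [Homeomorph.symm_apply_apply]
    have h2 := congrArg (fun w : Strip => p1 w) h1
    simp only [p1, tauS, transZ] at h2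
    have h3 : (1:ℝ) = ((c*c' : ℤ) : ℝ) := by
      push_cast at h2 ⊢
      linarith
    exact_mod_cast h3.symm
  refine ⟨c, ?_, hc⟩
  exact Int.isUnit_iff.mp (IsUnit.of_mul_eq_one c' hcc')

lemma iterate_shift (H : Strip ≃ₜ Strip) (c : ℤ)
    (hc : ∀ z : Strip, H (tauS z) = transZ c (H z)) :
    ∀ n : ℕ, ∀ m : ℤ, ∀ z : Strip,
      (⇑H)^[n] (transZ m z) = transZ (m * c^n) ((⇑H)^[n] z) := by
  intro n
  induction n with
  | zero => intro m z; simp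
  | succ n ih =>
    intro m z
    rw [Function.iterate_succ_apply, Function.iterate_succ_apply]
    rw [deck_extend H c hc m z, ih]
    congr 1
    ring

end Deck

section Paths

/-- The affine segment path in `ℂ`. -/
def segPath (u v : ℂ) : Path u v where
  toFun := fun t => u + ((t:ℝ):ℂ) * (v - u)
  continuous_toFun := by
    exact continuous_const.add ((Complex.continuous_ofReal.comp
      continuous_subtype_val).mul continuous_const)
  source' := by simp
  target' := by simp

lemma segPath_re (u v : ℂ) (t : unitInterval) :
    ((segPath u v) t).re = u.re + (t:ℝ)*(v.re - u.re) := by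
  show (u + ((t:ℝ):ℂ) * (v - u)).re = _
  simp [Complex.add_re, Complex.mul_re]

lemma segPath_im (u v : ℂ) (t : unitInterval) :
    ((segPath u v) t).im = u.im + (t:ℝ)*(v.im - u.im) := by
  show (u + ((t:ℝ):ℂ) * (v - u)).im = _
  simp [Complex.add_im, Complex.mul_im]

lemma crossing_arc_normalize {α : Set Strip} (hα : IsCrossingArcS α) :
    ∃ e : C(unitInterval, Strip), Function.Injective e ∧ Set.range e = α ∧
      e 0 ∈ bdMinusS ∧ e 1 ∈ bdPlusS ∧ α ∩ bdS = {e 0, e 1} := by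
  obtain ⟨e, hemb, hrange, hends, hbd⟩ := hα
  rcases hends with ⟨h0, h1⟩ | ⟨h0, h1⟩
  · exact ⟨e, hemb.injective, hrange, h0, h1, hbd⟩
  · have hinv : Function.Involutive unitInterval.symm := unitInterval.symm_symm
    refine ⟨e.comp ⟨unitInterval.symm, unitInterval.continuous_symm⟩,
      hemb.injective.comp hinv.injective, ?_, ?_, ?_, ?_⟩
    · rw [← hrange]
      show Set.range (fun t => e (unitInterval.symm t)) = Set.range e
      have : (fun t => e (unitInterval.symm t)) = ⇑e ∘ unitInterval.symm := rfl
      rw [this, Set.range_comp, hinv.surjective.range_eq, Set.image_univ]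
    · show e (unitInterval.symm 0) ∈ bdMinusS
      rw [unitInterval.symm_zero]
      exact h1
    · show e (unitInterval.symm 1) ∈ bdPlusS
      rw [unitInterval.symm_one]
      exact h0
    · show α ∩ bdS = {e (unitInterval.symm 0), e (unitInterval.symm 1)}
      rw [unitInterval.symm_zero, unitInterval.symm_one, hbd, Set.pair_comm]

lemma halfR_preconn (c : ℝ) : IsPreconnected {z : Strip | c < p1 z} := by
  have : {z : Strip | c < p1 z} = (Set.Ioi c) ×ˢ (Set.univ : Set II) := by
    ext z; simp [p1, Set.mem_prod, Set.mem_Ioi]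
  rw [this]
  exact isPreconnected_Ioi.prod isPreconnected_univ

lemma halfL_preconn (c : ℝ) : IsPreconnected {z : Strip | p1 z < c} := by
  have : {z : Strip | p1 z < c} = (Set.Iio c) ×ˢ (Set.univ : Set II) := by
    ext z; simp [p1, Set.mem_prod, Set.mem_Iio]
  rw [this]
  exact isPreconnected_Iio.prod isPreconnected_univ

lemma rayR_preconn (a : ℝ) (r : II) : IsPreconnected {z : Strip | a ≤ p1 z ∧ z.2 = r} := by
  have : {z : Strip | a ≤ p1 z ∧ z.2 = r} = (Set.Ici a) ×ˢ ({r} : Set II) := by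
    ext z
    simp only [p1, Set.mem_setOf_eq, Set.mem_prod, Set.mem_Ici, Set.mem_singleton_iff]
  rw [this]
  exact isPreconnected_Ici.prod isPreconnected_singleton

lemma rayL_preconn (a : ℝ) (r : II) : IsPreconnected {z : Strip | p1 z ≤ a ∧ z.2 = r} := by
  have : {z : Strip | p1 z ≤ a ∧ z.2 = r} = (Set.Iic a) ×ˢ ({r} : Set II) := by
    ext z
    simp only [p1, Set.mem_setOf_eq, Set.mem_prod, Set.mem_Iic, Set.mem_singleton_iff]
  rw [this]
  exact isPreconnected_Iic.prod isPreconnected_singleton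

lemma lo_ne_hi : lo ≠ hi := by
  intro hcon
  have : ((-1 : ℝ)) = 1 := congrArg Subtype.val hcon
  norm_num at this

end Paths
/-- if a lift `H` of `h` maps one of the two connected components `W`
of the complement of a crossing arc of the strip into itself, then either every forward
`H`-orbit is bounded on the right, or every forward `H`-orbit is bounded on the left. -/
theorem stmt11 (h : Ann ≃ₜ Ann) (hiso : IsotopicToId h)
    (H : Strip ≃ₜ Strip) (hH : IsLift H h)
    (αt : Set Strip) (hα : IsCrossingArcS αt)
    (W : Set Strip) (hW : ∃ x ∈ αtᶜ, W = connectedComponentIn αtᶜ x)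
    (hHW : ⇑H '' W ⊆ W) :
    (∀ z : Strip, BddAbove (Set.range fun n : ℕ => p1 ((⇑H)^[n] z))) ∨
    (∀ z : Strip, BddBelow (Set.range fun n : ℕ => p1 ((⇑H)^[n] z))) := by
  classical
  obtain ⟨e, heinj, herange, he0, he1, hebd⟩ := crossing_arc_normalize hα
  obtain ⟨x₀, hx₀, rfl⟩ := hW
  set W : Set Strip := connectedComponentIn αtᶜ x₀ with hWdef
  have hαcomp : IsCompact αt := herange ▸ isCompact_range e.continuous
  have hαcl : IsClosed αt := hαcomp.isClosed
  have he0mem : e 0 ∈ αt := herange ▸ Set.mem_range_self 0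
  have he1mem : e 1 ∈ αt := herange ▸ Set.mem_range_self 1
  have he0snd : (e 0).2 = lo := he0
  have he1snd : (e 1).2 = hi := he1
  obtain ⟨M, hM⟩ := ((hαcomp.image (continuous_fst : Continuous fun z : Strip => z.1)).isBounded).subset_closedBall 0
  have hMabs : ∀ p ∈ αt, |p1 p| ≤ M := by
    intro p hp
    have := hM ⟨p, hp, rfl⟩
    simpa [Real.dist_eq, p1] using this
  have hM0 : 0 ≤ M := le_trans (abs_nonneg _) (hMabs (e 0) he0mem)
  have hWsub : W ⊆ αtᶜ := connectedComponentIn_subset _ _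
  have hx₀W : x₀ ∈ W := mem_connectedComponentIn hx₀
  have hWpre : IsPreconnected W := isPreconnected_connectedComponentIn
  have habs : ∀ S : Set Strip, IsPreconnected S → S ⊆ αtᶜ →
      ∀ w, w ∈ W → w ∈ S → S ⊆ W := by
    intro S hS hsub w hwW hwS
    rw [hWdef, connectedComponentIn_eq hwW]
    exact hS.subset_connectedComponentIn hwS hsub
  have hstep : ∀ w ∈ W, H w ∈ W := fun w hw => hHW ⟨w, hw, rfl⟩
  have hiter : ∀ n : ℕ, ∀ w ∈ W, (⇑H)^[n] w ∈ W := by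
    intro n
    induction n with
    | zero => intro w hw; exact hw
    | succ n ih =>
      intro w hw
      rw [Function.iterate_succ_apply]
      exact ih _ (hstep w hw)
  obtain ⟨c, hc1, hc⟩ := deck_lemma h H hH
  have hcpow : ∀ n : ℕ, c^n = 1 ∨ c^n = -1 := by
    intro n
    rcases hc1 with rfl | rfl
    · left; exact one_pow n
    · rcases Nat.even_or_odd n with he | ho
      · left; exact he.neg_one_pow
      · right; exact ho.neg_one_pow
  by_cases hPR : ∃ w ∈ W, M < p1 w <;> by_cases hPL : ∃ w ∈ W, p1 w < -M
  · -- both directions: impossible by the crossing lemma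
    exfalso
    obtain ⟨wp, hwpW, hwp⟩ := hPR
    obtain ⟨wm, hwmW, hwm⟩ := hPL
    set b0 : ℝ := p1 (e 0) with hb0def
    set b1 : ℝ := p1 (e 1) with hb1def
    have hb0 : |b0| ≤ M := hMabs _ he0mem
    have hb1 : |b1| ≤ M := hMabs _ he1mem
    set RayM : Set ℂ := {z : ℂ | z.re = b0 ∧ z.im ≤ -1} with hRayMdef
    set RayP : Set ℂ := {z : ℂ | z.re = b1 ∧ 1 ≤ z.im} with hRayPdef
    set Cb : Set ℂ := (iotaC '' αt ∪ RayM) ∪ RayP with hCbdef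
    have hRayMcl : IsClosed RayM := by
      rw [hRayMdef, Set.setOf_and]
      exact (isClosed_eq Complex.continuous_re continuous_const).inter
        (isClosed_le Complex.continuous_im continuous_const)
    have hRayPcl : IsClosed RayP := by
      rw [hRayPdef, Set.setOf_and]
      exact (isClosed_eq Complex.continuous_re continuous_const).inter
        (isClosed_le continuous_const Complex.continuous_im)
    have hCbcl : IsClosed Cb := by
      rw [hCbdef]
      exact (((hαcomp.image iotaC_cont).isClosed).union hRayMcl).union hRayPcl
    have hO : IsOpen Cbᶜ := hCbcl.isOpen_compl
    have hWO : ∀ w ∈ W, iotaC w ∈ Cbᶜ := by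
      intro w hw hmem
      rcases hmem with (⟨a, ha, hae⟩ | hray) | hray
      · exact (hWsub hw) ((iotaC_inj hae) ▸ ha)
      · obtain ⟨hr1, hr2⟩ := hray
        rw [iotaC_im] at hr2
        have him : (w.2 : ℝ) = -1 := le_antisymm hr2 w.2.2.1
        have hweq : w = e 0 := by
          apply Prod.ext
          · rw [iotaC_re] at hr1; exact hr1
          · rw [he0snd]; exact Subtype.ext him
        exact (hWsub hw) (hweq ▸ he0mem)
      · obtain ⟨hr1, hr2⟩ := hray
        rw [iotaC_im] at hr2
        have him : (w.2 : ℝ) = 1 := le_antisymm w.2.2.2 hr2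
        have hweq : w = e 1 := by
          apply Prod.ext
          · rw [iotaC_re] at hr1; exact hr1
          · rw [he1snd]; exact Subtype.ext him
        exact (hWsub hw) (hweq ▸ he1mem)
    set Ω : Set ℂ := connectedComponentIn Cbᶜ (iotaC wp) with hΩdef
    have hwpO : iotaC wp ∈ Cbᶜ := hWO wp hwpW
    have hWΩ : iotaC '' W ⊆ Ω := by
      apply IsPreconnected.subset_connectedComponentIn
        (hWpre.image iotaC iotaC_cont.continuousOn) ⟨wp, hwpW, rfl⟩
      rintro x ⟨w, hw, rfl⟩
      exact hWO w hw
    have hΩo : IsOpen Ω := hO.connectedComponentIn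
    have hΩconn : IsConnected Ω :=
      ⟨⟨_, mem_connectedComponentIn hwpO⟩, isPreconnected_connectedComponentIn⟩
    have hΩpath : IsPathConnected Ω := hΩo.isConnected_iff_isPathConnected.mp hΩconn
    have hjoin : JoinedIn Ω (iotaC wm) (iotaC wp) :=
      hΩpath.joinedIn _ (hWΩ ⟨wm, hwmW, rfl⟩) _ (hWΩ ⟨wp, hwpW, rfl⟩)
    set p : Path (iotaC wm) (iotaC wp) := hjoin.somePath with hpdef
    have hp : ∀ t, p t ∈ Ω := hjoin.somePath_mem
    obtain ⟨Y₀, hY₀⟩ := (isCompact_range p.continuous).isBounded.subset_closedBall 0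
    have hY₀' : ∀ t : unitInterval, |(p t).im| ≤ Y₀ := by
      intro t
      have := hY₀ (Set.mem_range_self t)
      rw [Metric.mem_closedBall, Complex.dist_eq, sub_zero] at this
      exact le_trans (Complex.abs_im_le_norm _) this
    set Y : ℝ := max Y₀ 0 + 1 with hYdef
    have hY1 : 1 ≤ Y := by
      rw [hYdef]; have := le_max_right Y₀ (0:ℝ); linarith
    have hYb : ∀ t : unitInterval, |(p t).im| ≤ Y - 1 := by
      intro t
      rw [hYdef]
      have := hY₀' t
      have h2 := le_max_left Y₀ (0:ℝ)
      simp only [add_sub_cancel_right]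
      linarith
    set A : ℂ := Complex.mk b0 (-Y) with hAdef
    set B : ℂ := Complex.mk b1 Y with hBdef
    set arcP : Path (iotaC (e 0)) (iotaC (e 1)) :=
      ⟨⟨fun t => iotaC (e t), iotaC_cont.comp e.continuous⟩, rfl, rfl⟩ with harcPdef
    set g0 : Path A B := (segPath A (iotaC (e 0))).trans (arcP.trans (segPath (iotaC (e 1)) B))
      with hg0def
    have harcre : ∀ t : unitInterval, -M ≤ (arcP t).re ∧ (arcP t).re ≤ M := by
      intro t
      have : (arcP t).re = p1 (e t) := rfl
      rw [this]
      exact abs_le.mp (hMabs _ (herange ▸ Set.mem_range_self t))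
    have hseg1 : ∀ t : unitInterval, ((segPath A (iotaC (e 0))) t) ∈ RayM := by
      intro t
      have h1 : ((segPath A (iotaC (e 0))) t).re = b0 := by
        rw [segPath_re]
        have : (iotaC (e 0)).re = b0 := rfl
        rw [this]
        show A.re + t*(b0 - A.re) = b0
        rw [show A.re = b0 from rfl]
        ring
      have h2 : ((segPath A (iotaC (e 0))) t).im ≤ -1 := by
        rw [segPath_im]
        have he0im : (iotaC (e 0)).im = -1 := by
          rw [iotaC_im, he0snd]; rfl
        rw [he0im, show A.im = -Y from rfl]
        have ht1 := t.2.2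
        have ht0 := t.2.1
        nlinarith
      exact ⟨h1, h2⟩
    have hseg2 : ∀ t : unitInterval, ((segPath (iotaC (e 1)) B) t) ∈ RayP := by
      intro t
      have h1 : ((segPath (iotaC (e 1)) B) t).re = b1 := by
        rw [segPath_re]
        have : (iotaC (e 1)).re = b1 := rfl
        rw [this, show B.re = b1 from rfl]
        ring
      have h2 : 1 ≤ ((segPath (iotaC (e 1)) B) t).im := by
        rw [segPath_im]
        have he1im : (iotaC (e 1)).im = 1 := by
          rw [iotaC_im, he1snd]; rfl
        rw [he1im, show B.im = Y from rfl]
        have ht1 := t.2.2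
        have ht0 := t.2.1
        nlinarith
      exact ⟨h1, h2⟩
    have hg0mem : ∀ t : unitInterval, g0 t ∈ Cb := by
      intro t
      have hmem : g0 t ∈ Set.range ⇑g0 := Set.mem_range_self t
      rw [hg0def, Path.trans_range, Path.trans_range] at hmem
      rcases hmem with hm | hm | hm
      · obtain ⟨t', ht'⟩ := hm
        rw [← ht']
        exact Or.inl (Or.inr (hseg1 t'))
      · obtain ⟨t', ht'⟩ := hm
        rw [← ht']
        exact Or.inl (Or.inl ⟨e t', herange ▸ Set.mem_range_self t', rfl⟩)
      · obtain ⟨t', ht'⟩ := hm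
        rw [← ht']
        exact Or.inr (hseg2 t')
    have hCbre : ∀ z ∈ Cb, -M ≤ z.re ∧ z.re ≤ M := by
      intro z hz
      rcases hz with (⟨a, ha, rfl⟩ | hz) | hz
      · rw [iotaC_re]
        exact abs_le.mp (hMabs _ ha)
      · rw [hz.1]; exact abs_le.mp hb0
      · rw [hz.1]; exact abs_le.mp hb1
    set f : ℝ → ℂ := fun s => p (Set.projIcc 0 1 zero_le_one s) with hfdef
    set g : ℝ → ℂ := fun s => g0 (Set.projIcc 0 1 zero_le_one s) with hgdef
    have hproj0 : Set.projIcc (0:ℝ) 1 zero_le_one 0 = (0 : unitInterval) := by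
      apply Subtype.ext
      simp [Set.projIcc]
    have hproj1 : Set.projIcc (0:ℝ) 1 zero_le_one 1 = (1 : unitInterval) := by
      apply Subtype.ext
      simp [Set.projIcc]
    have hf0 : f 0 = iotaC wm := by rw [hfdef]; simp only [hproj0]; exact p.source
    have hf1 : f 1 = iotaC wp := by rw [hfdef]; simp only [hproj1]; exact p.target
    have hg0' : g 0 = A := by rw [hgdef]; simp only [hproj0]; exact g0.source
    have hg1 : g 1 = B := by rw [hgdef]; simp only [hproj1]; exact g0.target
    obtain ⟨s, hs, t, ht, heq⟩ := crossing_lemma f g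
      ((p.continuous.comp continuous_projIcc).continuousOn)
      ((g0.continuous.comp continuous_projIcc).continuousOn)
      (by
        intro t' ht'
        rw [hf0]
        have := (hCbre _ (hg0mem (Set.projIcc 0 1 zero_le_one t'))).1
        rw [iotaC_re]
        have hgt' : g t' = g0 (Set.projIcc 0 1 zero_le_one t') := rfl
        rw [hgt']
        have hwm' : wm.1 < -M := hwm
        linarith)
      (by
        intro t' ht'
        rw [hf1]
        have := (hCbre _ (hg0mem (Set.projIcc 0 1 zero_le_one t'))).2
        rw [iotaC_re]
        have hgt' : g t' = g0 (Set.projIcc 0 1 zero_le_one t') := rfl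
        rw [hgt']
        have hwp' : M < wp.1 := hwp
        linarith)
      (by
        intro s' hs'
        rw [hg0']
        have := abs_le.mp (hYb (Set.projIcc 0 1 zero_le_one s'))
        have hfs' : f s' = p (Set.projIcc 0 1 zero_le_one s') := rfl
        rw [hfs', show A.im = -Y from rfl]
        linarith [this.1])
      (by
        intro s' hs'
        rw [hg1]
        have := abs_le.mp (hYb (Set.projIcc 0 1 zero_le_one s'))
        have hfs' : f s' = p (Set.projIcc 0 1 zero_le_one s') := rfl
        rw [hfs', show B.im = Y from rfl]
        linarith [this.2])
    have hfΩ : f s ∈ Ω := hp _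
    have hgC : g t ∈ Cb := hg0mem _
    have hΩO : Ω ⊆ Cbᶜ := connectedComponentIn_subset _ _
    exact (hΩO hfΩ) (heq ▸ hgC)
  · -- right-going only: all orbits bounded below
    push_neg at hPL
    refine Or.inr (fun z => ?_)
    obtain ⟨k, hk⟩ := exists_nat_gt (M - p1 z)
    have hzk : transZ k z ∈ W := by
      obtain ⟨wp, hwpW, hwp⟩ := hPR
      refine habs {z' : Strip | M < p1 z'} (halfR_preconn M) ?_ wp hwpW hwp ?_
      · intro p hp hpα
        exact absurd ((abs_le.mp (hMabs p hpα)).2) (not_le.mpr hp)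
      · show M < p1 (transZ k z)
        rw [p1_transZ]
        push_cast
        linarith
    refine ⟨-M - k, ?_⟩
    rintro v ⟨n, rfl⟩
    have hlow : -M ≤ p1 ((⇑H)^[n] (transZ k z)) := hPL _ (hiter n _ hzk)
    rw [iterate_shift H c hc n k z, p1_transZ] at hlow
    have hb : (((k:ℤ)*c^n : ℤ) : ℝ) ≤ (k:ℝ) := by
      rcases hcpow n with hcn | hcn <;> rw [hcn] <;> push_cast <;>
        linarith [Nat.cast_nonneg (α := ℝ) k]
    show -M - (k:ℝ) ≤ p1 ((⇑H)^[n] z)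
    linarith
  · -- left-going only: all orbits bounded above
    push_neg at hPR
    refine Or.inl (fun z => ?_)
    obtain ⟨k, hk⟩ := exists_nat_gt (M + p1 z)
    have hzk : transZ (-(k:ℤ)) z ∈ W := by
      obtain ⟨wm, hwmW, hwm⟩ := hPL
      refine habs {z' : Strip | p1 z' < -M} (halfL_preconn (-M)) ?_ wm hwmW hwm ?_
      · intro p hp hpα
        exact absurd ((abs_le.mp (hMabs p hpα)).1) (not_le.mpr hp)
      · show p1 (transZ (-(k:ℤ)) z) < -M
        rw [p1_transZ]
        push_cast
        linarith
    refine ⟨M + k, ?_⟩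
    rintro v ⟨n, rfl⟩
    have hup : p1 ((⇑H)^[n] (transZ (-(k:ℤ)) z)) ≤ M := hPR _ (hiter n _ hzk)
    rw [iterate_shift H c hc n (-(k:ℤ)) z, p1_transZ] at hup
    have hb : -(k:ℝ) ≤ ((-(k:ℤ)*c^n : ℤ) : ℝ) := by
      rcases hcpow n with hcn | hcn <;> rw [hcn] <;> push_cast <;>
        linarith [Nat.cast_nonneg (α := ℝ) k]
    show p1 ((⇑H)^[n] z) ≤ M + (k:ℝ)
    push_cast at hup hb ⊢
    linarith
  · -- bounded component: impossible by the retraction argument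
    exfalso
    push_neg at hPR hPL
    have hrayarg : ∀ w ∈ W, ∀ (r : II) (ept : Strip), ept ∈ αt → ept.2 = r → w.2 = r →
        (∀ y : Strip, y ∈ αt → y.2 = r → y = ept) → False := by
      intro w hw r ept heptα heptr hwr huniq
      have hwne : p1 w ≠ p1 ept := by
        intro hcon
        exact (hWsub hw) ((Prod.ext hcon (hwr.trans heptr.symm)) ▸ heptα)
      rcases lt_or_gt_of_ne hwne with hlt | hgt
      · have hsub : {z : Strip | p1 z ≤ p1 w ∧ z.2 = r} ⊆ αtᶜ := by
          intro y hy hyα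
          rw [huniq y hyα hy.2] at hy
          exact absurd hy.1 (not_le.mpr hlt)
        have hray := habs _ (rayL_preconn (p1 w) r) hsub w hw ⟨le_refl _, hwr⟩
        have hmem : ((min (-M-1) (p1 w), r) : Strip) ∈ W := hray ⟨min_le_right _ _, rfl⟩
        have hge := hPL _ hmem
        have hle : p1 ((min (-M-1) (p1 w), r) : Strip) ≤ -M-1 := min_le_left _ _
        linarith
      · have hsub : {z : Strip | p1 w ≤ p1 z ∧ z.2 = r} ⊆ αtᶜ := by
          intro y hy hyα
          rw [huniq y hyα hy.2] at hy
          exact absurd hy.1 (not_le.mpr hgt)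
        have hray := habs _ (rayR_preconn (p1 w) r) hsub w hw ⟨le_refl _, hwr⟩
        have hmem : ((max (M+1) (p1 w), r) : Strip) ∈ W := hray ⟨le_max_right _ _, rfl⟩
        have hge := hPR _ hmem
        have hle : M+1 ≤ p1 ((max (M+1) (p1 w), r) : Strip) := le_max_left _ _
        linarith
    have huniq0 : ∀ y : Strip, y ∈ αt → y.2 = lo → y = e 0 := by
      intro y hy hylo
      have hmem : y ∈ αt ∩ bdS := ⟨hy, Or.inl hylo⟩
      rw [hebd] at hmem
      rcases hmem with hm | hm
      · exact hm
      · exfalso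
        apply lo_ne_hi
        rw [← hylo, hm]
        exact he1snd
    have huniq1 : ∀ y : Strip, y ∈ αt → y.2 = hi → y = e 1 := by
      intro y hy hyhi
      have hmem : y ∈ αt ∩ bdS := ⟨hy, Or.inr hyhi⟩
      rw [hebd] at hmem
      rcases hmem with hm | hm
      · exfalso
        apply lo_ne_hi
        rw [← he0snd, ← hm]
        exact hyhi
      · exact hm
    have hWint : ∀ w ∈ W, -1 < (w.2 : ℝ) ∧ (w.2 : ℝ) < 1 := by
      intro w hw
      have hlo : w.2 ≠ lo := fun hcon => hrayarg w hw lo (e 0) he0mem he0snd hcon huniq0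
      have hhi : w.2 ≠ hi := fun hcon => hrayarg w hw hi (e 1) he1mem he1snd hcon huniq1
      obtain ⟨ha, hb⟩ := w.2.2
      constructor
      · rcases lt_or_eq_of_le ha with hq | hq
        · exact hq
        · exact absurd (Subtype.ext hq.symm : w.2 = lo) hlo
      · rcases lt_or_eq_of_le hb with hq | hq
        · exact hq
        · exact absurd (Subtype.ext hq : w.2 = hi) hhi
    set W' : Set ℂ := iotaC '' W with hW'def
    have hW'o : IsOpen W' := by
      rw [Metric.isOpen_iff]
      rintro x' ⟨w, hwW, rfl⟩
      obtain ⟨-, ε, hε, hball⟩ := component_absorb hαcl hx₀ (hWsub hwW) (subset_closure hwW)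
      obtain ⟨hm1, hm2⟩ := hWint w hwW
      set δ : ℝ := min ε (min (1 - (w.2:ℝ)) ((w.2:ℝ) + 1)) with hδdef
      have hδpos : 0 < δ := by
        apply lt_min hε
        apply lt_min <;> linarith
      have hδε : δ ≤ ε := min_le_left _ _
      have hδ1 : δ ≤ 1 - (w.2:ℝ) := le_trans (min_le_right _ _) (min_le_left _ _)
      have hδ2 : δ ≤ (w.2:ℝ) + 1 := le_trans (min_le_right _ _) (min_le_right _ _)
      refine ⟨δ, hδpos, ?_⟩
      intro z hz
      rw [Metric.mem_ball] at hz
      have hre : |z.re - w.1| ≤ dist z (iotaC w) := by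
        rw [Complex.dist_eq]
        rw [show z.re - w.1 = (z - iotaC w).re by rw [Complex.sub_re, iotaC_re]]
        exact Complex.abs_re_le_norm _
      have him : |z.im - (w.2:ℝ)| ≤ dist z (iotaC w) := by
        rw [Complex.dist_eq]
        rw [show z.im - (w.2:ℝ) = (z - iotaC w).im by rw [Complex.sub_im, iotaC_im]]
        exact Complex.abs_im_le_norm _
      obtain ⟨ha1, ha2⟩ := abs_lt.mp (lt_of_le_of_lt him hz)
      have hzim1 : -1 < z.im := by linarith
      have hzim2 : z.im < 1 := by linarith
      refine ⟨(z.re, ⟨z.im, ⟨le_of_lt hzim1, le_of_lt hzim2⟩⟩), hball ?_, ?_⟩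
      · rw [Metric.mem_ball, Prod.dist_eq]
        apply max_lt
        · rw [Real.dist_eq]
          exact lt_of_le_of_lt hre (lt_of_lt_of_le hz hδε)
        · rw [Subtype.dist_eq, Real.dist_eq]
          exact lt_of_le_of_lt him (lt_of_lt_of_le hz hδε)
      · exact Complex.ext rfl rfl
    have hW'b : Bornology.IsBounded W' := by
      apply (Metric.isBounded_closedBall (x := (0:ℂ)) (r := M + 1)).subset
      rintro x' ⟨w, hw, rfl⟩
      rw [Metric.mem_closedBall, Complex.dist_eq, sub_zero]
      have h1 : |(iotaC w).re| ≤ M := by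
        rw [iotaC_re]
        exact abs_le.mpr ⟨hPL w hw, hPR w hw⟩
      have h2 : |(iotaC w).im| ≤ 1 := by
        rw [iotaC_im]
        exact abs_le.mpr w.2.2
      calc ‖iotaC w‖ ≤ |(iotaC w).re| + |(iotaC w).im| :=
            Complex.norm_le_abs_re_add_abs_im _
      _ ≤ M + 1 := add_le_add h1 h2
    set P : C(unitInterval, ℂ) := ⟨fun t => iotaC (e t), iotaC_cont.comp e.continuous⟩ with hPdef
    have hPinj : Function.Injective ⇑P := fun a b hab => heinj (iotaC_inj hab)
    obtain ⟨r, hrc, hrr, hrf⟩ := arc_retract P hPinj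
    have hrangeP : Set.range ⇑P = iotaC '' αt := by
      rw [← herange]
      exact Set.range_comp iotaC ⇑e
    apply no_bounded_component (iotaC '' αt) r hrc
      (fun x => hrangeP ▸ hrr x) (fun x hx => hrf x (hrangeP.symm ▸ hx))
      W' hW'o hW'b ?_ ?_ (iotaC x₀) ⟨x₀, hx₀W, rfl⟩
    · rintro x ⟨w, hw, rfl⟩ ⟨a, ha, hae⟩
      exact (hWsub hw) ((iotaC_inj hae) ▸ ha)
    · rintro x ⟨hx1, hx2⟩
      rw [iotaC_isClosedEmbedding.closure_image_eq] at hx1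
      obtain ⟨w, hwcl, rfl⟩ := hx1
      by_cases hwα : w ∈ αt
      · exact ⟨w, hwα, rfl⟩
      · exact absurd ⟨w, (component_absorb hαcl hx₀ hwα hwcl).1, rfl⟩ hx2
end
end
end

section
/- Let H: Ã → Ã be a homeomorphism of the strip Ã = ℝ×[−1,1] preserving each of the two boundary lines ℝ×{−1} and ℝ×{1}. Define f: ℝ² → ℝ² by f(x,y) = H(x,y) for |y| ≤ 1 and f(x,y) = H(x, y/|y|) + (0, y − y/|y|) for |y| ≥ 1. Then f is a homeomorphism of ℝ² extending H (orientation-preserving if H is), and every connected component of Fix(f) is either unbounded or is a connected component of Fix(H) contained in ℝ × (−1,1). -/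
noncomputable section

open Set MeasureTheory Topology Filter

attribute [local instance] MeasureTheory.Measure.Subtype.measureSpace

namespace Stmt14Aux

/-! ### The clamp function -/

def clamp (y : ℝ) : ℝ := max (-1) (min 1 y)

lemma clamp_mem (y : ℝ) : clamp y ∈ II := by
  constructor
  · exact le_max_left _ _
  · exact max_le (by norm_num) (min_le_left _ _)

lemma clamp_of_mem {y : ℝ} (h1 : -1 ≤ y) (h2 : y ≤ 1) : clamp y = y := by
  unfold clamp
  rw [min_eq_right h2, max_eq_right h1]

lemma clamp_of_ge {y : ℝ} (h : 1 ≤ y) : clamp y = 1 := by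
  unfold clamp
  rw [min_eq_left h, max_eq_right (by norm_num)]

lemma clamp_of_le {y : ℝ} (h : y ≤ -1) : clamp y = -1 := by
  unfold clamp
  rw [min_eq_right (h.trans (by norm_num)), max_eq_left h]

lemma continuous_clamp : Continuous clamp :=
  continuous_const.max (continuous_const.min continuous_id)

def clampI (y : ℝ) : II := ⟨clamp y, clamp_mem y⟩

lemma continuous_clampI : Continuous clampI :=
  continuous_clamp.subtype_mk _

/-! ### `iota` basics -/

lemma continuous_iota : Continuous iota :=
  continuous_fst.prodMk (continuous_subtype_val.comp continuous_snd)

lemma iota_injective : Function.Injective iota := by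
  intro a b h
  obtain ⟨h1, h2⟩ := Prod.ext_iff.mp h
  exact Prod.ext h1 (Subtype.ext h2)

lemma iota_inducing : Topology.IsInducing iota :=
  (Topology.IsInducing.id).prodMap Topology.IsInducing.subtypeVal

/-! ### The extension map -/

def fext (H : Strip ≃ₜ Strip) : ℝ × ℝ → ℝ × ℝ :=
  fun q => iota (H (q.1, clampI q.2)) + ((0 : ℝ), q.2 - clamp q.2)

lemma continuous_fext (H : Strip ≃ₜ Strip) : Continuous (fext H) := by
  apply Continuous.add
  · exact continuous_iota.comp (H.continuous.comp
      (continuous_fst.prodMk (continuous_clampI.comp continuous_snd)))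
  · exact continuous_const.prodMk
      (continuous_snd.sub (continuous_clamp.comp continuous_snd))

lemma fext_of_mem (H : Strip ≃ₜ Strip) (q : ℝ × ℝ) (hq : q.2 ∈ II) :
    fext H q = iota (H (q.1, ⟨q.2, hq⟩)) := by
  have h1 : clampI q.2 = ⟨q.2, hq⟩ := Subtype.ext (clamp_of_mem hq.1 hq.2)
  have h2 : q.2 - clamp q.2 = 0 := by rw [clamp_of_mem hq.1 hq.2]; ring
  unfold fext
  rw [h1, h2]
  ext <;> simp

lemma fext_low (H : Strip ≃ₜ Strip)
    (hbm : ∀ z : Strip, z.2 = lo → (H z).2 = lo) (x w : ℝ) (hw : w ≤ -1) :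
    fext H (x, w) = ((H (x, lo)).1, w) := by
  have h1 : clampI w = lo := Subtype.ext (clamp_of_le hw)
  have h2 : ((H (x, lo)).2 : ℝ) = -1 := by rw [hbm (x, lo) rfl]; rfl
  unfold fext
  simp only [h1, clamp_of_le hw]
  ext
  · simp [iota]
  · simp [iota, h2]; try ring

lemma fext_high (H : Strip ≃ₜ Strip)
    (hbp : ∀ z : Strip, z.2 = hi → (H z).2 = hi) (x w : ℝ) (hw : 1 ≤ w) :
    fext H (x, w) = ((H (x, hi)).1, w) := by
  have h1 : clampI w = hi := Subtype.ext (clamp_of_ge hw)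
  have h2 : ((H (x, hi)).2 : ℝ) = 1 := by rw [hbp (x, hi) rfl]; rfl
  unfold fext
  simp only [h1, clamp_of_ge hw]
  ext
  · simp [iota]
  · simp [iota, h2]; try ring

lemma fext_iota (H : Strip ≃ₜ Strip) (w : Strip) : fext H (iota w) = iota (H w) := by
  have h := fext_of_mem H (iota w) w.2.2
  rw [h]
  congr 1
  all_goals exact Prod.ext rfl (Subtype.ext rfl)

/-! ### Boundary surjectivity -/

lemma exists_boundary_pre (H : Strip ≃ₜ Strip) (b : II)
    (hb : ∀ z : Strip, z.2 = b → (H z).2 = b) (x : ℝ) :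
    ∃ t : ℝ, H (t, b) = (x, b) := by
  set v : ℝ → ℝ := fun t => (H (t, b)).1 with hv
  have hH : ∀ t, H (t, b) = (v t, b) := fun t => Prod.ext rfl (hb (t, b) rfl)
  have vcont : Continuous v :=
    continuous_fst.comp (H.continuous.comp (continuous_id.prodMk continuous_const))
  have vinj : Function.Injective v := by
    intro s t hst
    have h1 : H (s, b) = H (t, b) := by rw [hH, hH, hst]
    have h2 := H.injective h1
    exact congrArg Prod.fst h2
  set S : Set ℝ := Set.range v with hS
  have hSclosed : IsClosed S := by
    have h1 : IsClosed {z : Strip | z.2 = b} := isClosed_eq continuous_snd continuous_const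
    have h2 : IsClosed (H '' {z : Strip | z.2 = b}) := H.isClosedMap _ h1
    have h3 : S = (fun x : ℝ => ((x, b) : Strip)) ⁻¹' (H '' {z : Strip | z.2 = b}) := by
      ext y
      constructor
      · rintro ⟨t, rfl⟩
        exact ⟨(t, b), rfl, (hH t).symm ▸ (hH t)⟩
      · rintro ⟨z, hz, hzx⟩
        refine ⟨z.1, ?_⟩
        have hzb : ((z.1, b) : Strip) = z := Prod.ext rfl hz.symm
        have : H (z.1, b) = (y, b) := by rw [hzb, hzx]
        exact congrArg Prod.fst this
    rw [h3]
    exact h2.preimage (continuous_id.prodMk continuous_const)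
  have hSpre : IsPreconnected S := isPreconnected_range vcont
  -- no maximum
  have hnomax : ∀ m ∈ S, ∃ y ∈ S, m < y := by
    rintro m ⟨x0, rfl⟩
    by_contra hcon
    push_neg at hcon
    have hle : ∀ x, v x ≤ v x0 := fun x => hcon (v x) ⟨x, rfl⟩
    have h1 : v (x0 - 1) < v x0 :=
      lt_of_le_of_ne (hle _) (fun h => by have := vinj h; linarith)
    have h2 : v (x0 + 1) < v x0 :=
      lt_of_le_of_ne (hle _) (fun h => by have := vinj h; linarith)
    set r : ℝ := max (v (x0 - 1)) (v (x0 + 1)) with hr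
    have hrm : r < v x0 := max_lt h1 h2
    set qq : ℝ := (r + v x0) / 2 with hqq
    have hq1 : r < qq := by rw [hqq]; linarith
    have hq2 : qq < v x0 := by rw [hqq]; linarith
    obtain ⟨a, ha, hva⟩ := intermediate_value_Icc (by linarith : x0 - 1 ≤ x0)
      vcont.continuousOn ⟨((le_max_left _ _).trans hq1.le), hq2.le⟩
    obtain ⟨c, hc, hvc⟩ := intermediate_value_Icc' (by linarith : x0 ≤ x0 + 1)
      vcont.continuousOn ⟨((le_max_right _ _).trans hq1.le), hq2.le⟩
    have hac : a = c := vinj (hva.trans hvc.symm)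
    have ha0 : a < x0 := lt_of_le_of_ne ha.2 (fun h => by rw [h] at hva; linarith)
    have hc0 : x0 ≤ c := hc.1
    rw [hac] at ha0; linarith
  -- no minimum
  have hnomin : ∀ m ∈ S, ∃ y ∈ S, y < m := by
    rintro m ⟨x0, rfl⟩
    by_contra hcon
    push_neg at hcon
    have hle : ∀ x, v x0 ≤ v x := fun x => hcon (v x) ⟨x, rfl⟩
    have h1 : v x0 < v (x0 - 1) :=
      lt_of_le_of_ne (hle _) (fun h => by have := vinj h.symm; linarith)
    have h2 : v x0 < v (x0 + 1) :=
      lt_of_le_of_ne (hle _) (fun h => by have := vinj h.symm; linarith)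
    set r : ℝ := min (v (x0 - 1)) (v (x0 + 1)) with hr
    have hrm : v x0 < r := lt_min h1 h2
    set qq : ℝ := (r + v x0) / 2 with hqq
    have hq1 : qq < r := by rw [hqq]; linarith
    have hq2 : v x0 < qq := by rw [hqq]; linarith
    obtain ⟨a, ha, hva⟩ := intermediate_value_Icc' (by linarith : x0 - 1 ≤ x0)
      vcont.continuousOn ⟨hq2.le, hq1.le.trans (min_le_left _ _)⟩
    obtain ⟨c, hc, hvc⟩ := intermediate_value_Icc (by linarith : x0 ≤ x0 + 1)
      vcont.continuousOn ⟨hq2.le, hq1.le.trans (min_le_right _ _)⟩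
    have hac : a = c := vinj (hva.trans hvc.symm)
    have ha0 : a < x0 := lt_of_le_of_ne ha.2 (fun h => by rw [h] at hva; linarith)
    have hc0 : x0 ≤ c := hc.1
    rw [hac] at ha0; linarith
  have hne : S.Nonempty := ⟨v 0, 0, rfl⟩
  have hba : ¬ BddAbove S := by
    intro hb'
    have hmem := hSclosed.csSup_mem hne hb'
    obtain ⟨y, hy, hlt⟩ := hnomax _ hmem
    exact absurd (le_csSup hb' hy) (not_le.2 hlt)
  have hbb : ¬ BddBelow S := by
    intro hb'
    have hmem := hSclosed.csInf_mem hne hb'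
    obtain ⟨y, hy, hlt⟩ := hnomin _ hmem
    exact absurd (csInf_le hb' hy) (not_le.2 hlt)
  have hxS : x ∈ S := by
    obtain ⟨a', ha', hax⟩ : ∃ a' ∈ S, a' ≤ x := by
      by_contra h
      push_neg at h
      exact hbb ⟨x, fun y hy => (h y hy).le⟩
    obtain ⟨b', hb', hxb⟩ : ∃ b' ∈ S, x ≤ b' := by
      by_contra h
      push_neg at h
      exact hba ⟨x, fun y hy => (h y hy).le⟩
    exact hSpre.ordConnected.out ha' hb' ⟨hax, hxb⟩
  obtain ⟨t, ht⟩ := hxS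
  exact ⟨t, by rw [hH t, ht]⟩

lemma symm_boundary (H : Strip ≃ₜ Strip) (b : II)
    (hb : ∀ z : Strip, z.2 = b → (H z).2 = b) :
    ∀ z : Strip, z.2 = b → (H.symm z).2 = b := by
  intro z hz
  obtain ⟨t, ht⟩ := exists_boundary_pre H b hb z.1
  have h1 : H.symm (z.1, b) = (t, b) := by rw [← ht, Homeomorph.symm_apply_apply]
  have h2 : z = (z.1, b) := Prod.ext rfl hz
  rw [h2, h1]

/-! ### Inverse formula -/

lemma fext_inv (H : Strip ≃ₜ Strip)
    (hbm : ∀ z : Strip, z.2 = lo → (H z).2 = lo)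
    (hbp : ∀ z : Strip, z.2 = hi → (H z).2 = hi) (q : ℝ × ℝ) :
    fext H.symm (fext H q) = q := by
  set z : Strip := (q.1, clampI q.2) with hz
  set b : ℝ := ((H z).2 : ℝ) with hb
  have hbmem : b ∈ II := (H z).2.2
  have key : clamp (b + (q.2 - clamp q.2)) = b := by
    rcases le_or_gt q.2 (-1) with h | h
    · have h1 : clamp q.2 = -1 := clamp_of_le h
      have hz2 : z.2 = lo := Subtype.ext (by simp [hz, clampI, h1]; rfl)
      have hHb : (H z).2 = lo := hbm z hz2
      have hbval : b = -1 := by rw [hb, hHb]; rfl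
      rw [hbval, h1]
      have : (-1 : ℝ) + (q.2 - -1) = q.2 := by ring
      rw [this, clamp_of_le h]
    · rcases le_or_gt 1 q.2 with h' | h'
      · have h1 : clamp q.2 = 1 := clamp_of_ge h'
        have hz2 : z.2 = hi := Subtype.ext (by simp [hz, clampI, h1]; rfl)
        have hHb : (H z).2 = hi := hbp z hz2
        have hbval : b = 1 := by rw [hb, hHb]; rfl
        rw [hbval, h1]
        have : (1 : ℝ) + (q.2 - 1) = q.2 := by ring
        rw [this, clamp_of_ge h']
      · have h1 : clamp q.2 = q.2 := clamp_of_mem h.le h'.le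
        rw [h1]
        have : b + (q.2 - q.2) = b := by ring
        rw [this, clamp_of_mem hbmem.1 hbmem.2]
  have hfq : fext H q = ((H z).1, b + (q.2 - clamp q.2)) := by
    unfold fext
    rw [← hz]
    ext
    · simp [iota]
    · simp [iota, hb]
  rw [hfq]
  unfold fext
  have h1 : clampI (((H z).1, b + (q.2 - clamp q.2)) : ℝ × ℝ).2 = (H z).2 :=
    Subtype.ext key
  have h2 : ((((H z).1, b + (q.2 - clamp q.2)) : ℝ × ℝ).1, clampI
      (((H z).1, b + (q.2 - clamp q.2)) : ℝ × ℝ).2) = H z := by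
    rw [h1]
  rw [h2, Homeomorph.symm_apply_apply]
  ext
  · simp [iota, hz]
  · show clamp q.2 + (b + (q.2 - clamp q.2) - clamp (b + (q.2 - clamp q.2))) = q.2
    rw [key]
    ring

end Stmt14Aux
namespace Stmt14Aux

/-! ### Mix homeomorphisms of ℝ -/

def mix (v : ℝ → ℝ) (a x : ℝ) : ℝ := (1 - a) * x + a * v x

lemma mix_strictMono {v : ℝ → ℝ} (hm : StrictMono v) {a : ℝ} (h0 : 0 ≤ a) (h1 : a ≤ 1) :
    StrictMono (mix v a) := by
  intro x y hxy
  rcases h0.eq_or_lt with rfl | ha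
  · simpa [mix] using hxy
  · have h2 : (1 - a) * x ≤ (1 - a) * y := mul_le_mul_of_nonneg_left hxy.le (by linarith)
    have h3 : a * v x < a * v y := (mul_lt_mul_iff_right₀ ha).2 (hm hxy)
    unfold mix; linarith

lemma mix_continuous (v : ℝ → ℝ) (hc : Continuous v) (a : ℝ) : Continuous (mix v a) :=
  ((continuous_const.mul continuous_id).add (continuous_const.mul hc))

lemma mix_surjective {v : ℝ → ℝ} (hm : StrictMono v) (hs : Function.Surjective v)
    (hc : Continuous v) {a : ℝ} (h0 : 0 ≤ a) (h1 : a ≤ 1) :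
    Function.Surjective (mix v a) := by
  apply (mix_continuous v hc a).surjective
  · rw [tendsto_atTop_atTop]
    intro b
    obtain ⟨t, ht⟩ := hs b
    refine ⟨max b t, fun x hx => ?_⟩
    have hxb : b ≤ x := le_trans (le_max_left _ _) hx
    have hvx : b ≤ v x := ht ▸ hm.monotone (le_trans (le_max_right _ _) hx)
    calc b = (1 - a) * b + a * b := by ring
      _ ≤ (1 - a) * x + a * v x :=
        add_le_add (mul_le_mul_of_nonneg_left hxb (by linarith))
          (mul_le_mul_of_nonneg_left hvx h0)
  · rw [tendsto_atBot_atBot]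
    intro b
    obtain ⟨t, ht⟩ := hs b
    refine ⟨min b t, fun x hx => ?_⟩
    have hxb : x ≤ b := le_trans hx (min_le_left _ _)
    have hvx : v x ≤ b := ht ▸ hm.monotone (le_trans hx (min_le_right _ _))
    calc (1 - a) * x + a * v x ≤ (1 - a) * b + a * b :=
        add_le_add (mul_le_mul_of_nonneg_left hxb (by linarith))
          (mul_le_mul_of_nonneg_left hvx h0)
      _ = b := by ring

noncomputable def mixHomeo {v : ℝ → ℝ} (hm : StrictMono v) (hs : Function.Surjective v)
    (hc : Continuous v) {a : ℝ} (h0 : 0 ≤ a) (h1 : a ≤ 1) : ℝ ≃ₜ ℝ :=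
  (StrictMono.orderIsoOfSurjective (mix v a) (mix_strictMono hm h0 h1)
    (mix_surjective hm hs hc h0 h1)).toHomeomorph

lemma mixHomeo_apply {v : ℝ → ℝ} (hm : StrictMono v) (hs : Function.Surjective v)
    (hc : Continuous v) {a : ℝ} (h0 : 0 ≤ a) (h1 : a ≤ 1) (x : ℝ) :
    mixHomeo hm hs hc h0 h1 x = mix v a x := rfl

/-! ### Unbounded rays -/

lemma not_bounded_ray_up (x : ℝ) : ¬ Bornology.IsBounded ({x} ×ˢ Set.Ici (1 : ℝ)) := by
  intro hb
  obtain ⟨C, hC⟩ := isBounded_iff_forall_norm_le.1 hb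
  have h1 : ((x, max C 1 + 1) : ℝ × ℝ) ∈ {x} ×ˢ Set.Ici (1 : ℝ) :=
    ⟨rfl, by simp only [Set.mem_Ici]; linarith [le_max_right C 1]⟩
  have h2 := hC _ h1
  have h3 : ‖(max C 1 + 1 : ℝ)‖ ≤ ‖((x, max C 1 + 1) : ℝ × ℝ)‖ := by
    simpa using norm_snd_le ((x, max C 1 + 1) : ℝ × ℝ)
  have h4 : max C 1 + 1 ≤ C := le_trans (le_trans (le_abs_self _) h3) h2
  linarith [le_max_left C 1]

lemma not_bounded_ray_down (x : ℝ) : ¬ Bornology.IsBounded ({x} ×ˢ Set.Iic (-1 : ℝ)) := by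
  intro hb
  obtain ⟨C, hC⟩ := isBounded_iff_forall_norm_le.1 hb
  have h1 : ((x, -(max C 1) - 1) : ℝ × ℝ) ∈ {x} ×ˢ Set.Iic (-1 : ℝ) :=
    ⟨rfl, by simp only [Set.mem_Iic]; linarith [le_max_right C 1]⟩
  have h2 := hC _ h1
  have h3 : ‖(-(max C 1) - 1 : ℝ)‖ ≤ ‖((x, -(max C 1) - 1) : ℝ × ℝ)‖ := by
    simpa using norm_snd_le ((x, -(max C 1) - 1) : ℝ × ℝ)
  have h4 : max C 1 + 1 ≤ C := by
    have h5 : |(-(max C 1) - 1 : ℝ)| = max C 1 + 1 := by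
      rw [abs_of_nonpos (by linarith [le_max_right C 1])]; ring
    calc max C 1 + 1 = ‖(-(max C 1) - 1 : ℝ)‖ := h5.symm
      _ ≤ _ := le_trans h3 h2
  linarith [le_max_left C 1]

end Stmt14Aux
namespace Stmt14Aux

lemma isotopy_part (H : Strip ≃ₜ Strip)
    (hbm : ∀ z : Strip, z.2 = lo → (H z).2 = lo)
    (F : (ℝ × ℝ) ≃ₜ (ℝ × ℝ)) (hF : ∀ p, F p = fext H p)
    (hmono : ∀ x y : ℝ, x < y → p1 (H (x, lo)) < p1 (H (y, lo))) :
    IsotopicToId F := by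
  set v : ℝ → ℝ := fun x => (H (x, lo)).1 with hv
  have vmono : StrictMono v := fun a b hab => hmono a b hab
  have vcont : Continuous v :=
    continuous_fst.comp (H.continuous.comp (continuous_id.prodMk continuous_const))
  have vsurj : Function.Surjective v := by
    intro x
    obtain ⟨t, ht⟩ := exists_boundary_pre H lo hbm x
    exact ⟨t, congrArg Prod.fst ht⟩
  set s : ℝ → ℝ := fun t => (1 - t) / (t - 1/2) with hsdef
  set φ : ℝ × (ℝ × ℝ) → ℝ × ℝ := fun w =>
    if w.1 ≤ 1/2 then (mix v (2 * w.1) w.2.1, w.2.2)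
    else F (w.2 + -((0 : ℝ), s w.1)) + ((0 : ℝ), s w.1) with hφ
  have hbranch2 : ∀ (t : ℝ) (p : ℝ × ℝ), p.2 - s t ≤ -1 →
      F (p + -((0 : ℝ), s t)) + ((0 : ℝ), s t) = (v p.1, p.2) := by
    intro t p hp
    have h1 : p + -((0 : ℝ), s t) = (p.1, p.2 - s t) := by
      ext
      · show p.1 + -(0:ℝ) = p.1; ring
      · show p.2 + -(s t) = p.2 - s t; ring
    rw [h1, hF, fext_low H hbm p.1 (p.2 - s t) hp]
    ext
    · show (H (p.1, lo)).1 + (0:ℝ) = v p.1; rw [hv]; ring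
    · show p.2 - s t + s t = p.2; ring
  have hcont : Continuous φ := by
    rw [continuous_iff_continuousAt]
    rintro ⟨t, p⟩
    rcases lt_trichotomy t (1/2 : ℝ) with h | h | h
    · have hopen : IsOpen {w : ℝ × (ℝ × ℝ) | w.1 < 1/2} :=
        isOpen_lt continuous_fst continuous_const
      have hψ : Continuous (fun w : ℝ × (ℝ × ℝ) =>
          ((mix v (2 * w.1) w.2.1, w.2.2) : ℝ × ℝ)) := by
        apply Continuous.prodMk
        · exact ((continuous_const.sub (continuous_const.mul continuous_fst)).mul
            (continuous_fst.comp continuous_snd)).add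
            ((continuous_const.mul continuous_fst).mul
              (vcont.comp (continuous_fst.comp continuous_snd)))
        · exact continuous_snd.comp continuous_snd
      refine hψ.continuousAt.congr ?_
      refine Filter.eventuallyEq_of_mem (hopen.mem_nhds h) (fun w hw => ?_)
      rw [hφ]
      simp only
      rw [if_pos (le_of_lt hw)]
    · subst h
      set M : ℝ := max (p.2 + 2) 1 with hM
      have hM1 : (1:ℝ) ≤ M := le_max_right _ _
      have hM2 : p.2 + 2 ≤ M := le_max_left _ _
      have hMpos : (0:ℝ) < 1 + M := by linarith
      set T : ℝ := (1 + M/2) / (1 + M) with hT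
      have hThalf : 1/2 < T := by
        rw [hT, lt_div_iff₀ hMpos]; nlinarith
      have hopen : IsOpen {w : ℝ × (ℝ × ℝ) | w.1 < T ∧ w.2.2 < p.2 + 1} :=
        (isOpen_lt continuous_fst continuous_const).inter
          (isOpen_lt (continuous_snd.comp continuous_snd) continuous_const)
      have hmem : ((1/2 : ℝ), p) ∈ {w : ℝ × (ℝ × ℝ) | w.1 < T ∧ w.2.2 < p.2 + 1} :=
        ⟨hThalf, by simp only; linarith⟩
      have hψ : Continuous (fun w : ℝ × (ℝ × ℝ) =>
          ((mix v (2 * min w.1 (1/2)) w.2.1, w.2.2) : ℝ × ℝ)) := by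
        have hmin : Continuous (fun w : ℝ × (ℝ × ℝ) => min w.1 (1/2 : ℝ)) :=
          continuous_fst.min continuous_const
        apply Continuous.prodMk
        · exact ((continuous_const.sub (continuous_const.mul hmin)).mul
            (continuous_fst.comp continuous_snd)).add
            ((continuous_const.mul hmin).mul
              (vcont.comp (continuous_fst.comp continuous_snd)))
        · exact continuous_snd.comp continuous_snd
      refine hψ.continuousAt.congr ?_
      refine Filter.eventuallyEq_of_mem (hopen.mem_nhds hmem) (fun w hw => ?_)
      obtain ⟨hw1, hw2⟩ := hw
      rw [hφ]
      simp only
      rcases le_or_gt w.1 (1/2 : ℝ) with hle | hlt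
      · rw [if_pos hle, min_eq_left hle]
      · rw [if_neg (not_le.2 hlt)]
        have hw1' : w.1 * (1 + M) < 1 + M/2 := by
          rw [← lt_div_iff₀ hMpos]; exact hw1
        have hst : M < s w.1 := by
          rw [hsdef]
          simp only
          rw [lt_div_iff₀ (by linarith : (0:ℝ) < w.1 - 1/2)]
          nlinarith
        have hp2 : w.2.2 - s w.1 ≤ -1 := by linarith
        rw [min_eq_right hlt.le, hbranch2 w.1 w.2 hp2]
        have hmix : mix v (2 * (1/2 : ℝ)) w.2.1 = v w.2.1 := by
          unfold mix; norm_num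
        rw [hmix]
    · have hopen : IsOpen {w : ℝ × (ℝ × ℝ) | 1/2 < w.1} :=
        isOpen_lt continuous_const continuous_fst
      have hsC : ContinuousAt s t := by
        rw [hsdef]
        exact ContinuousAt.div ((continuous_const.sub continuous_id).continuousAt)
          ((continuous_id.sub continuous_const).continuousAt)
          (sub_ne_zero.2 (ne_of_gt h))
      have hg1 : ContinuousAt (fun w : ℝ × (ℝ × ℝ) => s w.1) (t, p) :=
        ContinuousAt.comp (g := s) (f := fun w : ℝ × (ℝ × ℝ) => w.1) hsC continuous_fst.continuousAt
      have hA : ContinuousAt (fun w : ℝ × (ℝ × ℝ) =>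
          F (w.2 + -((0:ℝ), s w.1)) + ((0:ℝ), s w.1)) (t, p) := by
        have h1 : ContinuousAt (fun w : ℝ × (ℝ × ℝ) => w.2 + -((0:ℝ), s w.1)) (t, p) :=
          continuous_snd.continuousAt.add (ContinuousAt.neg (continuousAt_const.prodMk hg1))
        exact (F.continuous.continuousAt.comp h1).add (continuousAt_const.prodMk hg1)
      refine hA.congr ?_
      refine Filter.eventuallyEq_of_mem (hopen.mem_nhds h) (fun w hw => ?_)
      rw [hφ]
      simp only
      rw [if_neg (not_le.2 hw)]
  have hΦcont : Continuous (fun w : unitInterval × (ℝ × ℝ) => φ ((w.1 : ℝ), w.2)) :=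
    hcont.comp ((continuous_subtype_val.comp continuous_fst).prodMk continuous_snd)
  refine ⟨⟨fun w => φ ((w.1 : ℝ), w.2), hΦcont⟩, ?_, ?_, ?_⟩
  · intro t
    rcases le_or_gt (t : ℝ) (1/2 : ℝ) with h | h
    · have h0 : (0:ℝ) ≤ 2 * (t:ℝ) := by have := t.2.1; linarith
      have h1 : 2 * (t:ℝ) ≤ 1 := by linarith
      refine ⟨(mixHomeo vmono vsurj vcont h0 h1).prodCongr (Homeomorph.refl ℝ), fun p => ?_⟩
      show φ ((t:ℝ), p) = _
      rw [hφ]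
      simp only
      rw [if_pos h]
      rfl
    · refine ⟨(Homeomorph.addRight (-((0:ℝ), s (t:ℝ)))).trans
        (F.trans (Homeomorph.addRight ((0:ℝ), s (t:ℝ)))), fun p => ?_⟩
      show φ ((t:ℝ), p) = _
      rw [hφ]
      simp only
      rw [if_neg (not_le.2 h)]
      rfl
  · intro p
    show φ (((0 : unitInterval) : ℝ), p) = p
    rw [hφ]
    simp only
    rw [show (((0 : unitInterval) : ℝ)) = 0 from rfl]
    rw [if_pos (by norm_num : (0:ℝ) ≤ 1/2)]
    have hmix : mix v (2 * (0:ℝ)) p.1 = p.1 := by unfold mix; ring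
    rw [hmix]
  · intro p
    show φ (((1 : unitInterval) : ℝ), p) = F p
    rw [hφ]
    simp only
    rw [show (((1 : unitInterval) : ℝ)) = 1 from rfl]
    rw [if_neg (by norm_num : ¬ (1:ℝ) ≤ 1/2)]
    have hs1 : s (1:ℝ) = 0 := by rw [hsdef]; norm_num
    rw [hs1]
    rw [show ((0:ℝ), (0:ℝ)) = (0 : ℝ × ℝ) from rfl, neg_zero, add_zero, add_zero]

end Stmt14Aux
namespace Stmt14Aux

lemma ray_up_fixed (H : Strip ≃ₜ Strip)
    (hbp : ∀ z : Strip, z.2 = hi → (H z).2 = hi)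
    (F : (ℝ × ℝ) ≃ₜ (ℝ × ℝ)) (hF : ∀ p, F p = fext H p)
    {p : ℝ × ℝ} (hp : F p = p) (h1 : 1 ≤ p.2) :
    {p.1} ×ˢ Set.Ici (1:ℝ) ⊆ {q : ℝ × ℝ | F q = q} := by
  have hfix : (H (p.1, hi)).1 = p.1 := by
    have h2 : fext H (p.1, p.2) = ((H (p.1, hi)).1, p.2) := fext_high H hbp p.1 p.2 h1
    have h3 : fext H p = p := by rw [← hF]; exact hp
    have h4 : ((H (p.1, hi)).1, p.2) = p := by rw [← h2]; exact h3
    exact congrArg Prod.fst h4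
  rintro ⟨x, w⟩ ⟨hx, hw⟩
  have hx' : x = p.1 := hx
  subst hx'
  show F (p.1, w) = (p.1, w)
  rw [hF, fext_high H hbp p.1 w hw, hfix]

lemma ray_down_fixed (H : Strip ≃ₜ Strip)
    (hbm : ∀ z : Strip, z.2 = lo → (H z).2 = lo)
    (F : (ℝ × ℝ) ≃ₜ (ℝ × ℝ)) (hF : ∀ p, F p = fext H p)
    {p : ℝ × ℝ} (hp : F p = p) (h1 : p.2 ≤ -1) :
    {p.1} ×ˢ Set.Iic (-1:ℝ) ⊆ {q : ℝ × ℝ | F q = q} := by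
  have hfix : (H (p.1, lo)).1 = p.1 := by
    have h2 : fext H (p.1, p.2) = ((H (p.1, lo)).1, p.2) := fext_low H hbm p.1 p.2 h1
    have h3 : fext H p = p := by rw [← hF]; exact hp
    have h4 : ((H (p.1, lo)).1, p.2) = p := by rw [← h2]; exact h3
    exact congrArg Prod.fst h4
  rintro ⟨x, w⟩ ⟨hx, hw⟩
  have hx' : x = p.1 := hx
  subst hx'
  show F (p.1, w) = (p.1, w)
  rw [hF, fext_low H hbm p.1 w hw, hfix]

end Stmt14Aux
/-- Lemma 4.1 of the paper: a homeomorphism `H` of the strip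
preserving each boundary line extends to a homeomorphism `F` of the plane by the formula
`F(x,y) = H(x, y/|y|) + (0, y - y/|y|)` for `|y| ≥ 1` (orientation-preserving — here:
isotopic to the identity — if `H` is orientation-preserving, i.e. increasing on the
lower boundary line), and every connected component of `Fix F` is either unbounded or a
connected component of `Fix H` contained in the open strip `ℝ × (-1,1)`. -/
theorem stmt14 (H : Strip ≃ₜ Strip)
    (hbm : ∀ z : Strip, z.2 = lo → (H z).2 = lo)
    (hbp : ∀ z : Strip, z.2 = hi → (H z).2 = hi) :
    ∃ F : (ℝ × ℝ) ≃ₜ (ℝ × ℝ),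
      (∀ q : ℝ × ℝ, ∀ hq : q.2 ∈ II, F q = iota (H (q.1, ⟨q.2, hq⟩))) ∧
      (∀ q : ℝ × ℝ, 1 ≤ |q.2| → ∀ hs : q.2 / |q.2| ∈ II,
        F q = iota (H (q.1, ⟨q.2 / |q.2|, hs⟩)) + ((0 : ℝ), q.2 - q.2 / |q.2|)) ∧
      ((∀ x y : ℝ, x < y → p1 (H (x, lo)) < p1 (H (y, lo))) → IsotopicToId F) ∧
      (∀ q : ℝ × ℝ, F q = q →
        (¬ Bornology.IsBounded (connectedComponentIn {p : ℝ × ℝ | F p = p} q) ∨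
         ∃ z : Strip, H z = z ∧ iota z = q ∧ -1 < (z.2 : ℝ) ∧ (z.2 : ℝ) < 1 ∧
           connectedComponentIn {p : ℝ × ℝ | F p = p} q ⊆
             {p : ℝ × ℝ | -1 < p.2 ∧ p.2 < 1} ∧
           connectedComponentIn {p : ℝ × ℝ | F p = p} q =
             iota '' connectedComponentIn {w : Strip | H w = w} z)) := by
  classical
  have hbm' := Stmt14Aux.symm_boundary H lo hbm
  have hbp' := Stmt14Aux.symm_boundary H hi hbp
  set F : (ℝ × ℝ) ≃ₜ (ℝ × ℝ) :=
    { toEquiv := ⟨Stmt14Aux.fext H, Stmt14Aux.fext H.symm,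
        Stmt14Aux.fext_inv H hbm hbp,
        fun q => by
          have h := Stmt14Aux.fext_inv H.symm hbm' hbp' q
          rwa [Homeomorph.symm_symm] at h⟩,
      continuous_toFun := Stmt14Aux.continuous_fext H,
      continuous_invFun := Stmt14Aux.continuous_fext H.symm } with hFdef
  have hF : ∀ p, F p = Stmt14Aux.fext H p := fun p => rfl
  refine ⟨F, ?_, ?_, ?_, ?_⟩
  · intro q hq
    rw [hF, Stmt14Aux.fext_of_mem H q hq]
  · intro q habs hs
    rcases le_or_gt 1 q.2 with h | h
    · have hpos : (0:ℝ) < q.2 := lt_of_lt_of_le one_pos h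
      have habs' : |q.2| = q.2 := abs_of_pos hpos
      have hdiv : q.2 / |q.2| = 1 := by rw [habs']; exact div_self (ne_of_gt hpos)
      have hsub : (⟨q.2 / |q.2|, hs⟩ : II) = hi := Subtype.ext hdiv
      have h2 : Stmt14Aux.fext H q = ((H (q.1, hi)).1, q.2) :=
        Stmt14Aux.fext_high H hbp q.1 q.2 h
      have h3 : ((H (q.1, hi)).2 : ℝ) = 1 := by rw [hbp (q.1, hi) rfl]; rfl
      rw [hF, h2, hsub, hdiv]
      ext
      · show (H (q.1, hi)).1 = (H (q.1, hi)).1 + 0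
        ring
      · show q.2 = ((H (q.1, hi)).2 : ℝ) + (q.2 - 1)
        rw [h3]; ring
    · have hneg : q.2 ≤ -1 := by
        rcases abs_cases q.2 with ⟨h1, h2⟩ | ⟨h1, h2⟩ <;> linarith
      have hlt0 : q.2 < 0 := by linarith
      have habs' : |q.2| = -q.2 := abs_of_neg hlt0
      have hdiv : q.2 / |q.2| = -1 := by
        rw [habs', div_neg, div_self (ne_of_lt hlt0)]
      have hsub : (⟨q.2 / |q.2|, hs⟩ : II) = lo := Subtype.ext hdiv
      have h2 : Stmt14Aux.fext H q = ((H (q.1, lo)).1, q.2) :=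
        Stmt14Aux.fext_low H hbm q.1 q.2 hneg
      have h3 : ((H (q.1, lo)).2 : ℝ) = -1 := by rw [hbm (q.1, lo) rfl]; rfl
      rw [hF, h2, hsub, hdiv]
      ext
      · show (H (q.1, lo)).1 = (H (q.1, lo)).1 + 0
        ring
      · show q.2 = ((H (q.1, lo)).2 : ℝ) + (q.2 - -1)
        rw [h3]; ring
  · intro hm
    exact Stmt14Aux.isotopy_part H hbm F hF hm
  · intro q hq
    by_cases hC : connectedComponentIn {p : ℝ × ℝ | F p = p} q ⊆
        {p : ℝ × ℝ | -1 < p.2 ∧ p.2 < 1}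
    · right
      have hqmem : q ∈ connectedComponentIn {p : ℝ × ℝ | F p = p} q :=
        mem_connectedComponentIn hq
      obtain ⟨hq1, hq2⟩ := hC hqmem
      set z : Strip := (q.1, ⟨q.2, ⟨hq1.le, hq2.le⟩⟩) with hzdef
      have hiz : iota z = q := rfl
      have hHz : H z = z := by
        have h1 : F q = iota (H z) := by
          rw [hF, Stmt14Aux.fext_of_mem H q ⟨hq1.le, hq2.le⟩]
        have h2 : iota (H z) = iota z := by rw [← h1, hq, hiz]
        exact Stmt14Aux.iota_injective h2
      refine ⟨z, hHz, hiz, hq1, hq2, hC, ?_⟩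
      apply Set.Subset.antisymm
      · intro pp hpp
        have himg : iota '' (iota ⁻¹' (connectedComponentIn {p : ℝ × ℝ | F p = p} q)) =
            connectedComponentIn {p : ℝ × ℝ | F p = p} q := by
          apply Set.Subset.antisymm (Set.image_preimage_subset _ _)
          intro r hr
          obtain ⟨hr1, hr2⟩ := hC hr
          exact ⟨(r.1, ⟨r.2, ⟨hr1.le, hr2.le⟩⟩), hr, rfl⟩
        have hEpre : IsPreconnected
            (iota ⁻¹' (connectedComponentIn {p : ℝ × ℝ | F p = p} q)) := by
          apply Stmt14Aux.iota_inducing.isPreconnected_image.1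
          rw [himg]
          exact isPreconnected_connectedComponentIn
        have hET : iota ⁻¹' (connectedComponentIn {p : ℝ × ℝ | F p = p} q) ⊆
            {w : Strip | H w = w} := by
          intro w hw
          have h0 : iota w ∈ {p : ℝ × ℝ | F p = p} :=
            connectedComponentIn_subset {p : ℝ × ℝ | F p = p} q hw
          have h1 : F (iota w) = iota w := h0
          rw [hF, Stmt14Aux.fext_iota] at h1
          exact Stmt14Aux.iota_injective h1
        have hzE : z ∈ iota ⁻¹' (connectedComponentIn {p : ℝ × ℝ | F p = p} q) := by
          simp only [Set.mem_preimage, hiz]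
          exact hqmem
        have hsub := hEpre.subset_connectedComponentIn hzE hET
        rw [← himg] at hpp
        obtain ⟨w, hwE, hwq⟩ := hpp
        exact ⟨w, hsub hwE, hwq⟩
      · rintro pp ⟨w, hw, rfl⟩
        have hpre : IsPreconnected (iota '' connectedComponentIn {w : Strip | H w = w} z) :=
          isPreconnected_connectedComponentIn.image _ Stmt14Aux.continuous_iota.continuousOn
        have hqmem' : q ∈ iota '' connectedComponentIn {w : Strip | H w = w} z :=
          ⟨z, mem_connectedComponentIn hHz, hiz⟩
        have hsub' : iota '' connectedComponentIn {w : Strip | H w = w} z ⊆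
            {p : ℝ × ℝ | F p = p} := by
          rintro _ ⟨w', hw', rfl⟩
          have h0 : w' ∈ {w : Strip | H w = w} :=
            connectedComponentIn_subset {w : Strip | H w = w} z hw'
          have h1 : H w' = w' := h0
          show F (iota w') = iota w'
          rw [hF, Stmt14Aux.fext_iota, h1]
        exact (hpre.subset_connectedComponentIn hqmem' hsub') ⟨w, hw, rfl⟩
    · left
      intro hbdd
      obtain ⟨pp, hpp, hppn⟩ := Set.not_subset.1 hC
      have hppS0 : pp ∈ {p : ℝ × ℝ | F p = p} :=
        connectedComponentIn_subset {p : ℝ × ℝ | F p = p} q hpp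
      have hppS : F pp = pp := hppS0
      have hcompeq : connectedComponentIn {p : ℝ × ℝ | F p = p} pp =
          connectedComponentIn {p : ℝ × ℝ | F p = p} q := (connectedComponentIn_eq hpp).symm
      rcases le_or_gt pp.2 (-1) with h | h
      · have hray := Stmt14Aux.ray_down_fixed H hbm F hF hppS h
        have hconn : IsPreconnected ({pp.1} ×ˢ Set.Iic (-1:ℝ)) :=
          isPreconnected_singleton.prod isPreconnected_Iic
        have hmem : pp ∈ {pp.1} ×ˢ Set.Iic (-1:ℝ) := ⟨rfl, h⟩
        have hsub := hconn.subset_connectedComponentIn hmem hray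
        rw [hcompeq] at hsub
        exact Stmt14Aux.not_bounded_ray_down pp.1 (hbdd.subset hsub)
      · have h1 : 1 ≤ pp.2 := by
          by_contra h2
          push_neg at h2
          exact hppn ⟨by linarith, h2⟩
        have hray := Stmt14Aux.ray_up_fixed H hbp F hF hppS h1
        have hconn : IsPreconnected ({pp.1} ×ˢ Set.Ici (1:ℝ)) :=
          isPreconnected_singleton.prod isPreconnected_Ici
        have hmem : pp ∈ {pp.1} ×ˢ Set.Ici (1:ℝ) := ⟨rfl, h1⟩
        have hsub := hconn.subset_connectedComponentIn hmem hray
        rw [hcompeq] at hsub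
        exact Stmt14Aux.not_bounded_ray_up pp.1 (hbdd.subset hsub)
end
end
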